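/- arXiv:1606.01359 — 7 statements merged into one kernel-verified Lean document; each statement's English description precedes it below -/
import Mathlib

section
/- Let X and Y be nontrivial real Banach spaces, let H be a closed linear subspace of L(X,Y) containing all finite rank operators, and let δ > 0. If H (with the induced operator norm) is δ-average rough and Y is non-rough, then the dual space X* is δ-average rough. -/
open scoped BigOperators

/-- A Banach space `Z` is `δ`-average rough. -/
def IsAverageRough (Z : Type*) [NormedAddCommGroup Z] (δ : ℝ) : Prop :=
  ∀ n : ℕ, 0 < n → ∀ x : Fin n → Z, (∀ i, ‖x i‖ = 1) →
    ∀ ε > (0 : ℝ), ∀ η > (0 : ℝ), ∃ y : Z, 0 < ‖y‖ ∧ ‖y‖ < η ∧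
      (δ - ε) * ‖y‖ ≤ (1 / (n : ℝ)) * ∑ i, (‖x i + y‖ + ‖x i - y‖) - 2

/-- A Banach space `Z` is `δ`-rough. -/
def IsRough (Z : Type*) [NormedAddCommGroup Z] (δ : ℝ) : Prop :=
  ∀ x : Z, ‖x‖ = 1 →
    ∀ ε > (0 : ℝ), ∀ η > (0 : ℝ), ∃ y : Z, 0 < ‖y‖ ∧ ‖y‖ < η ∧
      (δ - ε) * ‖y‖ ≤ ‖x + y‖ + ‖x - y‖ - 2

/-- A Banach space `Z` is non-rough if it is `ε`-rough for no `ε > 0`. -/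
def NonRough (Z : Type*) [NormedAddCommGroup Z] : Prop :=
  ¬ ∃ ε > (0 : ℝ), IsRough Z ε

/-- A Banach space `Z` is octahedral. -/
def Octahedral (Z : Type*) [NormedAddCommGroup Z] : Prop :=
  ∀ (n : ℕ) (x : Fin n → Z), (∀ i, ‖x i‖ = 1) →
    ∀ ε > (0 : ℝ), ∃ y : Z, ‖y‖ = 1 ∧ ∀ i, 2 - ε ≤ ‖x i + y‖

/-- A Banach space `Z` is alternatively octahedral. -/
def AlternativelyOctahedral (Z : Type*) [NormedAddCommGroup Z] : Prop :=
  ∀ (n : ℕ) (x : Fin n → Z), (∀ i, ‖x i‖ = 1) →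
    ∀ ε > (0 : ℝ), ∃ y : Z, ‖y‖ = 1 ∧ ∀ i, 2 - ε ≤ max ‖x i + y‖ ‖x i - y‖

/-- A Banach space `X` is weakly `δ`-average rough: every non-empty relatively weak*
open subset of the closed unit ball of the dual has diameter at least `δ`. -/
def WeaklyAverageRough (X : Type*) [NormedAddCommGroup X] [NormedSpace ℝ X] (δ : ℝ) : Prop :=
  ∀ V : Set (WeakDual ℝ X), IsOpen V →
    ∀ U : Set (StrongDual ℝ X),
      U = {f : StrongDual ℝ X | ‖f‖ ≤ 1} ∩
            {f : StrongDual ℝ X | StrongDual.toWeakDual f ∈ V} →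
      U.Nonempty → δ ≤ Metric.diam U

set_option maxHeartbeats 1000000


lemma exists_near_attain {X Y : Type*} [NormedAddCommGroup X] [NormedSpace ℝ X]
    [NormedAddCommGroup Y] [NormedSpace ℝ Y] (T : X →L[ℝ] Y) {γ : ℝ} (hγ : 0 < γ) :
    ∃ x : X, ‖x‖ ≤ 1 ∧ ‖T‖ - γ ≤ ‖T x‖ := by
  by_contra h
  push_neg at h
  have h0 : (0:ℝ) < ‖T‖ - γ := by simpa using h 0 (by simp)
  have hle : ‖T‖ ≤ ‖T‖ - γ := by
    apply ContinuousLinearMap.opNorm_le_bound _ h0.le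
    intro v
    rcases eq_or_ne v 0 with rfl | hv
    · simp
    · have hnv : 0 < ‖v‖ := norm_pos_iff.mpr hv
      have hu : ‖‖v‖⁻¹ • v‖ ≤ 1 := by
        rw [norm_smul, norm_inv, norm_norm, inv_mul_cancel₀ hnv.ne']
      have h2 := (h (‖v‖⁻¹ • v) hu).le
      rw [map_smul, norm_smul, norm_inv, norm_norm] at h2
      calc ‖T v‖ = ‖v‖ * (‖v‖⁻¹ * ‖T v‖) := by field_simp
        _ ≤ ‖v‖ * (‖T‖ - γ) := by exact mul_le_mul_of_nonneg_left h2 hnv.le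
        _ = (‖T‖ - γ) * ‖v‖ := by ring
  linarith


/-- Smoothness estimate: if `y₀` is a unit vector whose roughness modulus is at most `θ`
up to radius `η₀ ≤ 1`, and `f₀` norms `y₀`, then `‖a • y₀ + z‖ ≤ |a + f₀ z| + θ‖z‖`
whenever `‖z‖ < η₀ * |a|`. -/
lemma smooth_est {Y : Type*} [NormedAddCommGroup Y] [NormedSpace ℝ Y]
    {y₀ : Y} {f₀ : Y →L[ℝ] ℝ} {θ η₀ : ℝ} (hy₀ : ‖y₀‖ = 1) (hf₀ : ‖f₀‖ = 1) (hfy : f₀ y₀ = 1) (hη₁ : η₀ ≤ 1)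
    (hsm : ∀ z : Y, 0 < ‖z‖ → ‖z‖ < η₀ → ‖y₀ + z‖ + ‖y₀ - z‖ - 2 ≤ θ * ‖z‖) :
    ∀ (a : ℝ) (z : Y), a ≠ 0 → ‖z‖ < η₀ * |a| → ‖a • y₀ + z‖ ≤ |a + f₀ z| + θ * ‖z‖ := by
  -- first, the one-sided estimate at y₀
  have hplus : ∀ z : Y, 0 < ‖z‖ → ‖z‖ < η₀ → ‖y₀ + z‖ ≤ 1 + f₀ z + θ * ‖z‖ := by
    intro z hz1 hz2
    have h1 : 1 - f₀ z ≤ ‖y₀ - z‖ := by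
      have : f₀ (y₀ - z) ≤ ‖y₀ - z‖ := by
        calc f₀ (y₀ - z) ≤ |f₀ (y₀ - z)| := le_abs_self _
          _ = ‖f₀ (y₀ - z)‖ := rfl
          _ ≤ ‖f₀‖ * ‖y₀ - z‖ := f₀.le_opNorm _
          _ = ‖y₀ - z‖ := by rw [hf₀, one_mul]
      rw [map_sub, hfy] at this
      linarith
    have := hsm z hz1 hz2
    linarith
  -- positive case
  have hpos : ∀ (a : ℝ) (z : Y), 0 < a → ‖z‖ < η₀ * a → ‖a • y₀ + z‖ ≤ |a + f₀ z| + θ * ‖z‖ := by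
    intro a z ha hz
    rcases eq_or_ne z 0 with rfl | hz0
    · simp [norm_smul, hy₀, abs_of_pos ha, abs_of_pos, le_abs_self]
    · have hnz : 0 < ‖z‖ := norm_pos_iff.mpr hz0
      set w := a⁻¹ • z with hw
      have hwn : ‖w‖ = a⁻¹ * ‖z‖ := by
        rw [hw, norm_smul, norm_inv, Real.norm_eq_abs, abs_of_pos ha]
      have hwpos : 0 < ‖w‖ := by rw [hwn]; positivity
      have hwlt : ‖w‖ < η₀ := by
        rw [hwn]
        calc a⁻¹ * ‖z‖ < a⁻¹ * (η₀ * a) := mul_lt_mul_of_pos_left hz (inv_pos.mpr ha)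
          _ = η₀ := by field_simp
      have hkey := hplus w hwpos hwlt
      have heq : a • y₀ + z = a • (y₀ + w) := by
        rw [smul_add, hw, smul_smul, mul_inv_cancel₀ ha.ne', one_smul]
      have hfw : f₀ w = a⁻¹ * f₀ z := by rw [hw, map_smul]; rfl
      have h2 : ‖a • y₀ + z‖ ≤ a + f₀ z + θ * ‖z‖ := by
        rw [heq, norm_smul, Real.norm_eq_abs, abs_of_pos ha]
        calc a * ‖y₀ + w‖ ≤ a * (1 + f₀ w + θ * ‖w‖) := by
              exact mul_le_mul_of_nonneg_left hkey ha.le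
          _ = a + f₀ z + θ * ‖z‖ := by
              rw [hfw, hwn]; field_simp
      have h3 : 0 ≤ a + f₀ z := by
        have : |f₀ z| ≤ ‖z‖ := by
          calc |f₀ z| = ‖f₀ z‖ := rfl
            _ ≤ ‖f₀‖ * ‖z‖ := f₀.le_opNorm _
            _ = ‖z‖ := by rw [hf₀, one_mul]
        have hza : ‖z‖ ≤ a := by
          calc ‖z‖ ≤ η₀ * a := hz.le
            _ ≤ 1 * a := by exact mul_le_mul_of_nonneg_right hη₁ ha.le
            _ = a := one_mul a
        have := abs_le.mp this
        linarith
      calc ‖a • y₀ + z‖ ≤ a + f₀ z + θ * ‖z‖ := h2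
        _ ≤ |a + f₀ z| + θ * ‖z‖ := by linarith [le_abs_self (a + f₀ z)]
  -- general case
  intro a z ha hz
  rcases lt_or_gt_of_ne ha with han | hap
  · have h := hpos (-a) (-z) (by linarith) (by rwa [norm_neg, abs_of_neg han] at *)
    calc ‖a • y₀ + z‖ = ‖(-a) • y₀ + (-z)‖ := by
          rw [← norm_neg]; congr 1; rw [neg_smul]; abel
      _ ≤ |(-a) + f₀ (-z)| + θ * ‖-z‖ := h
      _ = |a + f₀ z| + θ * ‖z‖ := by rw [map_neg, norm_neg, ← abs_neg]; ring_nf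
  · exact hpos a z hap (by rwa [abs_of_pos hap] at hz)

theorem stmt9
    (X Y : Type*) [NormedAddCommGroup X] [NormedSpace ℝ X] [CompleteSpace X] [Nontrivial X]
    [NormedAddCommGroup Y] [NormedSpace ℝ Y] [CompleteSpace Y] [Nontrivial Y]
    (H : Submodule ℝ (X →L[ℝ] Y)) (hHclosed : IsClosed (H : Set (X →L[ℝ] Y)))
    (hHfin : ∀ T : X →L[ℝ] Y, FiniteDimensional ℝ (LinearMap.range (T : X →ₗ[ℝ] Y)) → T ∈ H)
    (δ : ℝ) (hδ : 0 < δ)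
    (hH : IsAverageRough H δ) (hY : NonRough Y) :
    IsAverageRough (StrongDual ℝ X) δ := by
  intro n hn x hx ε hε η hη
  have npos : (0:ℝ) < (n:ℝ) := by exact_mod_cast hn
  -- the average is always at least 2
  have hge2 : ∀ y : StrongDual ℝ X,
      (2:ℝ) ≤ (1 / (n : ℝ)) * ∑ i, (‖x i + y‖ + ‖x i - y‖) := by
    intro y
    have h1 : ∀ i : Fin n, (2:ℝ) ≤ ‖x i + y‖ + ‖x i - y‖ := by
      intro i
      have := norm_add_le (x i + y) (x i - y)
      have h2 : (x i + y) + (x i - y) = (2:ℝ) • x i := by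
        rw [two_smul]; abel
      rw [h2, norm_smul] at this
      simp [hx i] at this
      linarith
    have hsum : (n:ℝ) * 2 ≤ ∑ i, (‖x i + y‖ + ‖x i - y‖) := by
      calc (n:ℝ) * 2 = ∑ _i : Fin n, (2:ℝ) := by
            rw [Finset.sum_const, Finset.card_univ, Fintype.card_fin]; ring
        _ ≤ _ := Finset.sum_le_sum (fun i _ => h1 i)
    calc (2:ℝ) = (1/(n:ℝ)) * ((n:ℝ) * 2) := by field_simp
      _ ≤ _ := by
          apply mul_le_mul_of_nonneg_left hsum
          positivity
  by_cases hδε : δ ≤ ε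
  · -- trivial case : δ - ε ≤ 0
    obtain ⟨x₀, hx₀⟩ := exists_ne (0 : X)
    obtain ⟨f, hf1, _⟩ := exists_dual_vector ℝ x₀ (norm_ne_zero_iff.mpr hx₀)
    refine ⟨(η/2) • f, ?_, ?_, ?_⟩
    · rw [norm_smul, hf1, Real.norm_eq_abs, abs_of_pos (by linarith)]; linarith
    · rw [norm_smul, hf1, Real.norm_eq_abs, abs_of_pos (by linarith)]; linarith
    · have := hge2 ((η/2) • f)
      have hle0 : (δ - ε) * ‖(η/2) • f‖ ≤ 0 :=
        mul_nonpos_of_nonpos_of_nonneg (by linarith) (norm_nonneg _)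
      linarith
  · push_neg at hδε   -- ε < δ
    set θ : ℝ := min (ε/16) 1 with hθdef
    have hθpos : 0 < θ := lt_min (by linarith) one_pos
    have hθ1 : θ ≤ 1 := min_le_right _ _
    have hθε : θ ≤ ε/16 := min_le_left _ _
    -- non-roughness of Y at level θ
    have hNR : ¬ IsRough Y θ := fun h => hY ⟨θ, hθpos, h⟩
    unfold IsRough at hNR
    push_neg at hNR
    obtain ⟨y₀, hy₀1, ρ, hρ, η₀', hη₀', hsm'⟩ := hNR
    set η₀ : ℝ := min η₀' 1 with hη₀def
    have hη₀pos : 0 < η₀ := lt_min hη₀' one_pos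
    have hη₀1 : η₀ ≤ 1 := min_le_right _ _
    have hsm : ∀ z : Y, 0 < ‖z‖ → ‖z‖ < η₀ → ‖y₀ + z‖ + ‖y₀ - z‖ - 2 ≤ θ * ‖z‖ := by
      intro z h1 h2
      have h3 := hsm' z h1 (lt_of_lt_of_le h2 (min_le_left _ _))
      nlinarith [norm_nonneg z]
    -- norming functional
    have hy₀ne : y₀ ≠ 0 := by intro h; rw [h, norm_zero] at hy₀1; norm_num at hy₀1
    obtain ⟨f₀, hf₀1, hfy₀'⟩ := exists_dual_vector ℝ y₀ (norm_ne_zero_iff.mpr hy₀ne)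
    have hfy₀ : f₀ y₀ = 1 := by rw [show ((‖y₀‖:ℝ) : ℝ) = 1 by exact_mod_cast hy₀1] at hfy₀'; exact hfy₀'
    -- the rank-one operators
    set T : Fin n → (X →L[ℝ] Y) := fun i => (x i).smulRight y₀ with hTdef
    have hTnorm : ∀ i, ‖T i‖ = 1 := by
      intro i
      rw [hTdef]
      rw [ContinuousLinearMap.norm_smulRight_apply, hx i, hy₀1, one_mul]
    have hTmem : ∀ i, T i ∈ H := by
      intro i
      apply hHfin
      have hle : LinearMap.range ((T i : X →ₗ[ℝ] Y)) ≤ Submodule.span ℝ {y₀} := by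
        rintro _ ⟨v, rfl⟩
        exact Submodule.smul_mem _ _ (Submodule.mem_span_singleton_self y₀)
      exact Submodule.finiteDimensional_of_le hle
    set xH : Fin n → H := fun i => ⟨T i, hTmem i⟩ with hxHdef
    have hxHnorm : ∀ i, ‖xH i‖ = 1 := fun i => hTnorm i
    -- apply average roughness of H
    set η' : ℝ := min η (min (η₀/2) (1/8)) with hη'def
    have hη'pos : 0 < η' := lt_min hη (lt_min (by positivity) (by norm_num))
    obtain ⟨S, hS0, hSη, hSkey⟩ := hH n hn xH hxHnorm (ε/2) (by linarith) η' hη'pos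
    set Sv : X →L[ℝ] Y := (S : X →L[ℝ] Y) with hSvdef
    have hSvnorm : ‖Sv‖ = ‖S‖ := rfl
    have hSv0 : 0 < ‖Sv‖ := hS0
    have hSvη : ‖Sv‖ < η' := hSη
    have hSvη2 : ‖Sv‖ < η := lt_of_lt_of_le hSvη (min_le_left _ _)
    have hSvη3 : ‖Sv‖ < η₀/2 := lt_of_lt_of_le hSvη (le_trans (min_le_right _ _) (min_le_left _ _))
    have hSv8 : ‖Sv‖ < 1/8 := lt_of_lt_of_le hSvη (le_trans (min_le_right _ _) (min_le_right _ _))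
    set y : StrongDual ℝ X := f₀.comp Sv with hydef
    have hynorm : ‖y‖ ≤ ‖Sv‖ := by
      calc ‖y‖ ≤ ‖f₀‖ * ‖Sv‖ := ContinuousLinearMap.opNorm_comp_le _ _
        _ = ‖Sv‖ := by rw [hf₀1, one_mul]
    -- the main estimate
    have est : ∀ (i : Fin n) (S' : X →L[ℝ] Y), ‖S'‖ = ‖Sv‖ →
        ‖T i + S'‖ ≤ ‖x i + f₀.comp S'‖ + 2 * θ * ‖Sv‖ := by
      intro i S' hS'
      have hγ : 0 < θ * ‖Sv‖ := by positivity
      obtain ⟨v, hv1, hvatt⟩ := exists_near_attain (T i + S') hγ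
      set a : ℝ := x i v with hadef
      set z : Y := S' v with hzdef
      have happ : (T i + S') v = a • y₀ + z := by
        rw [ContinuousLinearMap.add_apply, hTdef]; rfl
      have hznorm : ‖z‖ ≤ ‖Sv‖ := by
        calc ‖z‖ ≤ ‖S'‖ * ‖v‖ := S'.le_opNorm v
          _ ≤ ‖S'‖ * 1 := by
              exact mul_le_mul_of_nonneg_left hv1 (norm_nonneg _)
          _ = ‖Sv‖ := by rw [hS', mul_one]
      -- |a| is large
      have hlow : 1 - ‖Sv‖ - θ * ‖Sv‖ ≤ ‖a • y₀ + z‖ := by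
        have h1 : ‖T i‖ ≤ ‖T i + S'‖ + ‖S'‖ := by
          calc ‖T i‖ = ‖(T i + S') - S'‖ := by congr 1; abel
            _ ≤ ‖T i + S'‖ + ‖S'‖ := norm_sub_le _ _
        rw [hTnorm i, hS'] at h1
        rw [happ] at hvatt
        linarith
      have hup : ‖a • y₀ + z‖ ≤ |a| + ‖Sv‖ := by
        calc ‖a • y₀ + z‖ ≤ ‖a • y₀‖ + ‖z‖ := norm_add_le _ _
          _ ≤ |a| + ‖Sv‖ := by
              rw [norm_smul, Real.norm_eq_abs, hy₀1, mul_one]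
              linarith
      have hθS : θ * ‖Sv‖ ≤ ‖Sv‖ := by
        calc θ * ‖Sv‖ ≤ 1 * ‖Sv‖ := mul_le_mul_of_nonneg_right hθ1 (norm_nonneg _)
          _ = ‖Sv‖ := one_mul _
      have hathird : 1/2 ≤ |a| := by linarith
      have hane : a ≠ 0 := by
        intro h; rw [h, abs_zero] at hathird; norm_num at hathird
      have hzlt : ‖z‖ < η₀ * |a| := by
        calc ‖z‖ ≤ ‖Sv‖ := hznorm
          _ < η₀/2 := hSvη3
          _ ≤ η₀ * |a| := by
              have := mul_le_mul_of_nonneg_left hathird hη₀pos.le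
              linarith
      have hsmkey := smooth_est hy₀1 hf₀1 hfy₀ hη₀1 hsm a z hane hzlt
      have habs : |a + f₀ z| ≤ ‖x i + f₀.comp S'‖ := by
        have h1 : a + f₀ z = (x i + f₀.comp S') v := by
          rw [ContinuousLinearMap.add_apply]; rfl
        rw [h1]
        calc |(x i + f₀.comp S') v| = ‖(x i + f₀.comp S') v‖ := rfl
          _ ≤ ‖x i + f₀.comp S'‖ * ‖v‖ := ContinuousLinearMap.le_opNorm _ _
          _ ≤ ‖x i + f₀.comp S'‖ * 1 := by
              exact mul_le_mul_of_nonneg_left hv1 (norm_nonneg _)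
          _ = ‖x i + f₀.comp S'‖ := mul_one _
      have hθz : θ * ‖z‖ ≤ θ * ‖Sv‖ := mul_le_mul_of_nonneg_left hznorm hθpos.le
      rw [happ] at hvatt
      linarith
    have hplusest : ∀ i, ‖T i + Sv‖ ≤ ‖x i + y‖ + 2 * θ * ‖Sv‖ := fun i => est i Sv rfl
    have hminusest : ∀ i, ‖T i - Sv‖ ≤ ‖x i - y‖ + 2 * θ * ‖Sv‖ := by
      intro i
      have h1 := est i (-Sv) (by rw [norm_neg])
      have h2 : f₀.comp (-Sv) = -y := by rw [hydef, ContinuousLinearMap.comp_neg]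
      rw [h2] at h1
      rw [sub_eq_add_neg, sub_eq_add_neg]
      exact h1
    -- transport the averaging inequality
    have hnormseq : ∀ i, ‖xH i + S‖ = ‖T i + Sv‖ ∧ ‖xH i - S‖ = ‖T i - Sv‖ :=
      fun i => ⟨rfl, rfl⟩
    have hsum1 : ∑ i, (‖xH i + S‖ + ‖xH i - S‖)
        ≤ ∑ i, (‖x i + y‖ + ‖x i - y‖) + (n:ℝ) * (4 * θ * ‖Sv‖) := by
      calc ∑ i, (‖xH i + S‖ + ‖xH i - S‖)
          ≤ ∑ i, ((‖x i + y‖ + ‖x i - y‖) + 4 * θ * ‖Sv‖) := by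
            apply Finset.sum_le_sum
            intro i _
            rw [(hnormseq i).1, (hnormseq i).2]
            have := hplusest i
            have := hminusest i
            linarith
        _ = ∑ i, (‖x i + y‖ + ‖x i - y‖) + (n:ℝ) * (4 * θ * ‖Sv‖) := by
            rw [Finset.sum_add_distrib, Finset.sum_const, Finset.card_univ,
              Fintype.card_fin, nsmul_eq_mul]
    have hkey2 : (δ - ε/2 - 4*θ) * ‖Sv‖ ≤ (1/(n:ℝ)) * ∑ i, (‖x i + y‖ + ‖x i - y‖) - 2 := by
      have h1 : (1/(n:ℝ)) * ∑ i, (‖xH i + S‖ + ‖xH i - S‖)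
          ≤ (1/(n:ℝ)) * ∑ i, (‖x i + y‖ + ‖x i - y‖) + 4 * θ * ‖Sv‖ := by
        calc (1/(n:ℝ)) * ∑ i, (‖xH i + S‖ + ‖xH i - S‖)
            ≤ (1/(n:ℝ)) * (∑ i, (‖x i + y‖ + ‖x i - y‖) + (n:ℝ) * (4 * θ * ‖Sv‖)) := by
              apply mul_le_mul_of_nonneg_left hsum1; positivity
          _ = (1/(n:ℝ)) * ∑ i, (‖x i + y‖ + ‖x i - y‖) + 4 * θ * ‖Sv‖ := by
              field_simp
      have h2 : (δ - ε/2) * ‖S‖ ≤ (1/(n:ℝ)) * ∑ i, (‖xH i + S‖ + ‖xH i - S‖) - 2 := hSkey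
      rw [hSvnorm] at h1 ⊢
      linarith
    have hcoef : δ - ε ≤ δ - ε/2 - 4*θ := by linarith
    have hcoefpos : 0 < δ - ε/2 - 4*θ := by linarith
    -- y ≠ 0
    have hypos : 0 < ‖y‖ := by
      rcases lt_or_eq_of_le (norm_nonneg y) with h | h
      · exact h
      · exfalso
        have hy0 : y = 0 := by rw [← norm_eq_zero]; exact h.symm
        have h2 : (1/(n:ℝ)) * ∑ i, (‖x i + y‖ + ‖x i - y‖) - 2 = 0 := by
          rw [hy0]
          have : ∀ i : Fin n, ‖x i + (0: StrongDual ℝ X)‖ + ‖x i - 0‖ = 2 := by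
            intro i; rw [add_zero, sub_zero, hx i]; norm_num
          rw [Finset.sum_congr rfl (fun i _ => this i), Finset.sum_const,
            Finset.card_univ, Fintype.card_fin, nsmul_eq_mul]
          field_simp; norm_num
        have h3 := mul_pos hcoefpos hSv0
        linarith
    refine ⟨y, hypos, lt_of_le_of_lt hynorm hSvη2, ?_⟩
    calc (δ - ε) * ‖y‖ ≤ (δ - ε/2 - 4*θ) * ‖Sv‖ := by
          apply mul_le_mul hcoef hynorm (norm_nonneg _) hcoefpos.le
      _ ≤ _ := hkey2
end

section
/- Let X and Y be nontrivial real Banach spaces, let H be a closed linear subspace of L(X,Y) containing all finite rank operators, and let δ > 0. If H (with the induced operator norm) is δ-rough and the dual space X* is non-rough, then Y is δ-rough. -/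
set_option maxHeartbeats 1000000
set_option synthInstance.maxHeartbeats 400000


open scoped BigOperators

lemma exists_near_norming' {X Y : Type*} [NormedAddCommGroup X] [NormedSpace ℝ X]
    [NormedAddCommGroup Y] [NormedSpace ℝ Y] (f : X →L[ℝ] ℝ) (A : X →L[ℝ] Y) {ν : ℝ}
    (hν : 0 < ν) : ∃ x : X, ‖x‖ ≤ 1 ∧ ‖A‖ - ν ≤ ‖A x‖ ∧ 0 ≤ f x := by
  obtain ⟨x, hx1, hx2⟩ := A.exists_lt_apply_of_lt_opNorm (show ‖A‖ - ν < ‖A‖ by linarith)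
  rcases le_or_gt 0 (f x) with h | h
  · exact ⟨x, hx1.le, hx2.le, h⟩
  · exact ⟨-x, by simpa using hx1.le, by rw [map_neg, norm_neg]; exact hx2.le,
      by rw [map_neg]; linarith⟩

lemma side_estimate' {X Y : Type*} [NormedAddCommGroup X] [NormedSpace ℝ X]
    [NormedAddCommGroup Y] [NormedSpace ℝ Y] (f : X →L[ℝ] ℝ) (hf1 : ‖f‖ = 1)
    (y₀ : Y) (hy₀ : ‖y₀‖ = 1) (S : X →L[ℝ] Y) {ν : ℝ} (hν : 0 < ν) :
    ∃ x : X, ‖x‖ ≤ 1 ∧ 1 - (2 * ‖S‖ + ν) ≤ f x ∧ f x ≤ 1 ∧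
      ‖f.smulRight y₀ + S‖ ≤ ‖y₀ + S x‖ + (2 * ‖S‖ + ν) * ‖S‖ + ν := by
  obtain ⟨x, hx1, hx2, hx3⟩ := exists_near_norming' f (f.smulRight y₀ + S) hν
  have hT : ‖f.smulRight y₀‖ = 1 := by
    rw [ContinuousLinearMap.norm_smulRight_apply, hf1, hy₀, one_mul]
  have happ : (f.smulRight y₀ + S) x = f x • y₀ + S x := by simp
  have hSx : ‖S x‖ ≤ ‖S‖ := by
    calc ‖S x‖ ≤ ‖S‖ * ‖x‖ := S.le_opNorm x
    _ ≤ ‖S‖ * 1 := by nlinarith [norm_nonneg S]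
    _ = ‖S‖ := mul_one _
  have hfx1 : f x ≤ 1 := by
    calc f x ≤ |f x| := le_abs_self _
    _ = ‖f x‖ := (Real.norm_eq_abs _).symm
    _ ≤ ‖f‖ * ‖x‖ := f.le_opNorm x
    _ ≤ 1 := by rw [hf1]; linarith
  have hlb : 1 - ‖S‖ ≤ ‖f.smulRight y₀ + S‖ := by
    have h := norm_add_le (f.smulRight y₀ + S) (-S)
    simp only [add_neg_cancel_right, norm_neg] at h
    linarith [hT ▸ h]
  have hax : ‖(f.smulRight y₀ + S) x‖ ≤ f x + ‖S x‖ := by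
    rw [happ]
    calc ‖f x • y₀ + S x‖ ≤ ‖f x • y₀‖ + ‖S x‖ := norm_add_le _ _
    _ = |f x| * ‖y₀‖ + ‖S x‖ := by rw [norm_smul, Real.norm_eq_abs]
    _ = f x + ‖S x‖ := by rw [abs_of_nonneg hx3, hy₀, mul_one]
  have hfxlb : 1 - (2 * ‖S‖ + ν) ≤ f x := by linarith
  refine ⟨x, hx1, hfxlb, hfx1, ?_⟩
  have hdec : f x • y₀ + S x = f x • (y₀ + S x) + (1 - f x) • S x := by
    rw [smul_add, sub_smul, one_smul]; abel
  have hup : ‖(f.smulRight y₀ + S) x‖ ≤ ‖y₀ + S x‖ + (2 * ‖S‖ + ν) * ‖S‖ := by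
    rw [happ, hdec]
    calc ‖f x • (y₀ + S x) + (1 - f x) • S x‖
        ≤ ‖f x • (y₀ + S x)‖ + ‖(1 - f x) • S x‖ := norm_add_le _ _
    _ = f x * ‖y₀ + S x‖ + (1 - f x) * ‖S x‖ := by
        rw [norm_smul, norm_smul, Real.norm_eq_abs, Real.norm_eq_abs,
          abs_of_nonneg hx3, abs_of_nonneg (by linarith)]
    _ ≤ ‖y₀ + S x‖ + (2 * ‖S‖ + ν) * ‖S‖ := by
        have h1 : f x * ‖y₀ + S x‖ ≤ 1 * ‖y₀ + S x‖ :=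
          mul_le_mul_of_nonneg_right hfx1 (norm_nonneg _)
        have h2 : (1 - f x) * ‖S x‖ ≤ (2 * ‖S‖ + ν) * ‖S‖ :=
          mul_le_mul (by linarith) hSx (norm_nonneg _) (by linarith [norm_nonneg S])
        linarith
  linarith

lemma slice_small' {X : Type*} [NormedAddCommGroup X] [NormedSpace ℝ X] [CompleteSpace X]
    (f : X →L[ℝ] ℝ) {κ η₂ : ℝ} (hκ : 0 ≤ κ) (hη₂ : 0 < η₂)
    (hf : ∀ g : X →L[ℝ] ℝ, ‖g‖ < η₂ → ‖f + g‖ + ‖f - g‖ ≤ 2 + κ * ‖g‖)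
    {τ : ℝ} (hτdef : τ = κ * (η₂ / 2) / 2) :
    ∀ x₁ x₂ : X, ‖x₁‖ ≤ 1 → ‖x₂‖ ≤ 1 → 1 - τ ≤ f x₁ → 1 - τ ≤ f x₂ →
      ‖x₁ - x₂‖ ≤ 2 * κ := by
  intro x₁ x₂ hx₁ hx₂ hfx₁ hfx₂
  by_cases hne : x₁ - x₂ = 0
  · rw [hne, norm_zero]; linarith
  obtain ⟨u, hu1, hu2⟩ := exists_dual_vector ℝ (x₁ - x₂) (norm_ne_zero_iff.mpr hne)
  have hu2' : u x₁ - u x₂ = ‖x₁ - x₂‖ := by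
    have h : u (x₁ - x₂) = ‖x₁ - x₂‖ := by exact_mod_cast hu2
    rw [map_sub] at h; exact h
  set t : ℝ := η₂ / 2 with htdef
  have ht : 0 < t := by positivity
  have hgn : ‖t • u‖ = t := by
    have h := norm_smul t u
    rw [hu1, Real.norm_eq_abs, abs_of_pos ht, mul_one] at h
    exact h
  have h := hf (t • u) (by rw [hgn]; linarith)
  rw [hgn] at h
  have h1 : f x₁ + t * u x₁ ≤ ‖f + t • u‖ := by
    have happ : (f + t • u) x₁ = f x₁ + t * u x₁ := by
      simp [ContinuousLinearMap.add_apply, ContinuousLinearMap.smul_apply, smul_eq_mul]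
    calc f x₁ + t * u x₁ = (f + t • u) x₁ := happ.symm
      _ ≤ |(f + t • u) x₁| := le_abs_self _
      _ = ‖(f + t • u) x₁‖ := (Real.norm_eq_abs _).symm
      _ ≤ ‖f + t • u‖ * ‖x₁‖ := (f + t • u).le_opNorm x₁
      _ ≤ ‖f + t • u‖ * 1 := mul_le_mul_of_nonneg_left hx₁ (norm_nonneg _)
      _ = ‖f + t • u‖ := mul_one _
  have h2 : f x₂ - t * u x₂ ≤ ‖f - t • u‖ := by
    have happ : (f - t • u) x₂ = f x₂ - t * u x₂ := by
      simp [ContinuousLinearMap.sub_apply, ContinuousLinearMap.smul_apply, smul_eq_mul]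
    calc f x₂ - t * u x₂ = (f - t • u) x₂ := happ.symm
      _ ≤ |(f - t • u) x₂| := le_abs_self _
      _ = ‖(f - t • u) x₂‖ := (Real.norm_eq_abs _).symm
      _ ≤ ‖f - t • u‖ * ‖x₂‖ := (f - t • u).le_opNorm x₂
      _ ≤ ‖f - t • u‖ * 1 := mul_le_mul_of_nonneg_left hx₂ (norm_nonneg _)
      _ = ‖f - t • u‖ := mul_one _
  have h5 : t * (u x₁ - u x₂) ≤ t * (2 * κ) := by nlinarith
  have h6 : u x₁ - u x₂ ≤ 2 * κ := le_of_mul_le_mul_left h5 ht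
  rw [← hu2']; exact h6


theorem stmt10
    (X Y : Type*) [NormedAddCommGroup X] [NormedSpace ℝ X] [CompleteSpace X] [Nontrivial X]
    [NormedAddCommGroup Y] [NormedSpace ℝ Y] [CompleteSpace Y] [Nontrivial Y]
    (H : Submodule ℝ (X →L[ℝ] Y)) (hHclosed : IsClosed (H : Set (X →L[ℝ] Y)))
    (hHfin : ∀ T : X →L[ℝ] Y, FiniteDimensional ℝ (LinearMap.range (T : X →ₗ[ℝ] Y)) → T ∈ H)
    (δ : ℝ) (hδ : 0 < δ)
    (hH : IsRough H δ) (hX : NonRough (StrongDual ℝ X)) :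
    IsRough Y δ := by
  intro y₀ hy₀ ε hε η hη
  have he : 0 < min ε δ := lt_min hε hδ
  have heδ : min ε δ ≤ δ := min_le_right _ _
  have main : ∃ y : Y, 0 < ‖y‖ ∧ ‖y‖ < η ∧
      (δ - min ε δ) * ‖y‖ ≤ ‖y₀ + y‖ + ‖y₀ - y‖ - 2 := by
    set e := min ε δ with he_def
    by_contra hcon
    push_neg at hcon
    have hy' : ∀ y : Y, ‖y‖ < η → ‖y₀ + y‖ + ‖y₀ - y‖ ≤ 2 + (δ - e) * ‖y‖ := by
      intro y hyn
      rcases eq_or_lt_of_le (norm_nonneg y) with h0 | h0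
      · have hyz : y = 0 := norm_eq_zero.mp h0.symm
        simp only [hyz, add_zero, sub_zero, hy₀, norm_zero, mul_zero]
        norm_num
      · linarith [hcon y h0 hyn]
    have h8 : (0:ℝ) < e / 8 := by positivity
    have hnr : ¬ IsRough (StrongDual ℝ X) (e / 8) := fun h => hX ⟨e / 8, h8, h⟩
    unfold IsRough at hnr
    push_neg at hnr
    obtain ⟨f, hf1, κ₂, hκ₂, η₂, hη₂, hf⟩ := hnr
    have hf' : ∀ g : StrongDual ℝ X, ‖g‖ < η₂ →
        ‖f + g‖ + ‖f - g‖ ≤ 2 + (e / 8) * ‖g‖ := by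
      intro g hg
      rcases eq_or_lt_of_le (norm_nonneg g) with h0 | h0
      · have hgz : g = 0 := norm_eq_zero.mp h0.symm
        simp only [hgz, add_zero, sub_zero, hf1, norm_zero, mul_zero]
        norm_num
      · have h := hf g h0 hg
        nlinarith [norm_nonneg g]
    have hslice := slice_small' f (le_of_lt h8) hη₂ hf' rfl
    set τ : ℝ := (e / 8) * (η₂ / 2) / 2 with hτdef
    have hτ : 0 < τ := by positivity
    have hTnorm : ‖f.smulRight y₀‖ = 1 := by
      rw [ContinuousLinearMap.norm_smulRight_apply, hf1, hy₀, one_mul]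
    have hTmem : f.smulRight y₀ ∈ H := by
      apply hHfin
      have hle : LinearMap.range ((f.smulRight y₀ : X →L[ℝ] Y) : X →ₗ[ℝ] Y) ≤
          Submodule.span ℝ {y₀} := by
        rintro z ⟨x, rfl⟩
        have hz : ((f.smulRight y₀ : X →L[ℝ] Y) : X →ₗ[ℝ] Y) x = f x • y₀ := by simp
        rw [hz]
        exact Submodule.smul_mem _ _ (Submodule.mem_span_singleton_self y₀)
      exact Submodule.finiteDimensional_of_le hle
    have hη₃ : 0 < min η (min (τ / (e / 8 + 2)) (e / (e + 16))) :=
      lt_min hη (lt_min (by positivity) (by positivity))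
    obtain ⟨S, hS0, hS1, hS2⟩ := hH ⟨f.smulRight y₀, hTmem⟩
      (by rw [Submodule.coe_norm]; exact hTnorm) (e / 8) h8 _ hη₃
    have hcn : ‖S‖ = ‖(S : X →L[ℝ] Y)‖ := rfl
    have hns1 : ‖(⟨f.smulRight y₀, hTmem⟩ + S : H)‖ = ‖f.smulRight y₀ + (S : X →L[ℝ] Y)‖ := rfl
    have hns2 : ‖(⟨f.smulRight y₀, hTmem⟩ - S : H)‖ = ‖f.smulRight y₀ - (S : X →L[ℝ] Y)‖ := rfl
    rw [hcn] at hS0 hS1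
    rw [hcn, hns1, hns2] at hS2
    set S' : X →L[ℝ] Y := (S : X →L[ℝ] Y) with hS'def
    have hν : 0 < (e / 8) * ‖S'‖ := by positivity
    obtain ⟨x₁, hx₁n, hfx₁lb, hfx₁ub, hU1⟩ := side_estimate' f hf1 y₀ hy₀ S' hν
    obtain ⟨x₂, hx₂n, hfx₂lb, hfx₂ub, hU2⟩ := side_estimate' f hf1 y₀ hy₀ (-S') hν
    rw [norm_neg] at hfx₂lb hU2
    have hU2' : ‖f.smulRight y₀ - S'‖ ≤
        ‖y₀ - S' x₂‖ + (2 * ‖S'‖ + (e / 8) * ‖S'‖) * ‖S'‖ + (e / 8) * ‖S'‖ := by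
      have h1 : f.smulRight y₀ + -S' = f.smulRight y₀ - S' := by abel
      have h2 : y₀ + (-S') x₂ = y₀ - S' x₂ := by
        rw [ContinuousLinearMap.neg_apply]; abel
      rw [h1, h2] at hU2
      exact hU2
    -- the near-norming points lie in the small slice
    have hsτ : ‖S'‖ * (e / 8 + 2) < τ := by
      have h := lt_of_lt_of_le hS1 (le_trans (min_le_right _ _) (min_le_left _ _))
      exact (lt_div_iff₀ (by positivity)).mp h
    have hfx₁τ : 1 - τ ≤ f x₁ := by nlinarith
    have hfx₂τ : 1 - τ ≤ f x₂ := by nlinarith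
    have hx12 : ‖x₁ - x₂‖ ≤ 2 * (e / 8) := hslice x₁ x₂ hx₁n hx₂n hfx₁τ hfx₂τ
    have hSd : ‖S' x₁ - S' x₂‖ ≤ ‖S'‖ * (2 * (e / 8)) := by
      rw [← map_sub]
      exact (S'.le_opNorm _).trans (mul_le_mul_of_nonneg_left hx12 (norm_nonneg _))
    have htri : ‖y₀ - S' x₂‖ ≤ ‖y₀ - S' x₁‖ + ‖S' x₁ - S' x₂‖ := by
      have h : y₀ - S' x₂ = (y₀ - S' x₁) + (S' x₁ - S' x₂) := by abel
      rw [h]; exact norm_add_le _ _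
    have hSx₁ : ‖S' x₁‖ ≤ ‖S'‖ := by
      calc ‖S' x₁‖ ≤ ‖S'‖ * ‖x₁‖ := S'.le_opNorm x₁
      _ ≤ ‖S'‖ * 1 := mul_le_mul_of_nonneg_left hx₁n (norm_nonneg _)
      _ = ‖S'‖ := mul_one _
    have hW : ‖y₀ + S' x₁‖ + ‖y₀ - S' x₁‖ ≤ 2 + (δ - e) * ‖S' x₁‖ :=
      hy' _ (lt_of_le_of_lt hSx₁ (lt_of_lt_of_le hS1 (min_le_left _ _)))
    have hW' : (δ - e) * ‖S' x₁‖ ≤ (δ - e) * ‖S'‖ :=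
      mul_le_mul_of_nonneg_left hSx₁ (by linarith)
    have hsmall : ‖S'‖ * (e + 16) ≤ e := by
      have h := lt_of_lt_of_le hS1 (le_trans (min_le_right _ _) (min_le_right _ _))
      exact ((lt_div_iff₀ (by positivity)).mp h).le
    nlinarith [mul_le_mul_of_nonneg_left hsmall (norm_nonneg S'), mul_pos he hS0,
      norm_nonneg S']
  obtain ⟨y, h1, h2, h3⟩ := main
  refine ⟨y, h1, h2, le_trans ?_ h3⟩
  exact mul_le_mul_of_nonneg_right (by linarith [min_le_left ε δ]) (norm_nonneg y)
end

section
/- Let X and Y be nontrivial real Banach spaces, let H be a closed linear subspace of L(X,Y) containing all finite rank operators, and let δ > 0. If H (with the induced operator norm) is δ-rough and Y is non-rough, then the dual space X* is δ-rough. -/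
open scoped BigOperators

/-- Near a "smooth" point `y₀` (with support functional `ystar`), adding a small
vector killed by `ystar` increases the norm only by `ρ * ‖z‖`. -/
lemma smooth_bound {Y : Type*} [NormedAddCommGroup Y] [NormedSpace ℝ Y]
    (y₀ : Y) (ystar : Y →L[ℝ] ℝ) (hys1 : ‖ystar‖ ≤ 1) (hysy : ystar y₀ = 1)
    (ρ η₀ : ℝ)
    (hsm : ∀ z : Y, ‖z‖ < η₀ → ‖y₀ + z‖ + ‖y₀ - z‖ ≤ 2 + ρ * ‖z‖)
    (a : ℝ) (ha : a ≠ 0) (z : Y) (hz0 : ystar z = 0) (hz : ‖z‖ < |a| * η₀) :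
    ‖a • y₀ + z‖ ≤ |a| + ρ * ‖z‖ := by
  have ha' : (0:ℝ) < |a| := abs_pos.mpr ha
  set w : Y := a⁻¹ • z with hw
  have hwn : ‖w‖ = |a|⁻¹ * ‖z‖ := by
    rw [hw, norm_smul, Real.norm_eq_abs, abs_inv]
  have hwlt : ‖w‖ < η₀ := by
    rw [hwn]
    rw [inv_mul_lt_iff₀ ha']
    linarith [hz]
  have hws : ystar w = 0 := by rw [hw, map_smul, hz0, smul_zero]
  have h1 : (1:ℝ) ≤ ‖y₀ - w‖ := by
    have := ystar.le_opNorm (y₀ - w)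
    have h2 : ystar (y₀ - w) = 1 := by rw [map_sub, hysy, hws, sub_zero]
    have h3 : ‖ystar‖ * ‖y₀ - w‖ ≤ ‖y₀ - w‖ := by
      have := norm_nonneg (y₀ - w)
      nlinarith
    calc (1:ℝ) = ystar (y₀ - w) := h2.symm
      _ ≤ ‖ystar (y₀ - w)‖ := le_abs_self _
      _ ≤ ‖ystar‖ * ‖y₀ - w‖ := ystar.le_opNorm _
      _ ≤ ‖y₀ - w‖ := h3
  have h4 : ‖y₀ + w‖ ≤ 1 + ρ * ‖w‖ := by
    have := hsm w hwlt
    linarith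
  have heq : a • y₀ + z = a • (y₀ + w) := by
    rw [smul_add, hw, smul_inv_smul₀ ha]
  rw [heq, norm_smul, Real.norm_eq_abs]
  calc |a| * ‖y₀ + w‖ ≤ |a| * (1 + ρ * ‖w‖) := by
        exact mul_le_mul_of_nonneg_left h4 (le_of_lt ha')
    _ = |a| + ρ * (|a| * ‖w‖) := by ring
    _ = |a| + ρ * ‖z‖ := by
        rw [hwn]
        field_simp

set_option maxHeartbeats 1000000 in
/-- One-sided estimate: `‖f ⊗ y₀ + S‖ ≤ ‖f + ystar ∘ S‖ + 2ρ‖S‖ + σ`. -/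
lemma side_bound {X Y : Type*} [NormedAddCommGroup X] [NormedSpace ℝ X]
    [NormedAddCommGroup Y] [NormedSpace ℝ Y]
    (f : StrongDual ℝ X) (hf : ‖f‖ = 1)
    (y₀ : Y) (hy₀ : ‖y₀‖ = 1)
    (ystar : Y →L[ℝ] ℝ) (hys1 : ‖ystar‖ ≤ 1) (hysy : ystar y₀ = 1)
    (ρ η₀ : ℝ) (hρ : 0 ≤ ρ) (hη₀ : 0 < η₀)
    (hsm : ∀ z : Y, ‖z‖ < η₀ → ‖y₀ + z‖ + ‖y₀ - z‖ ≤ 2 + ρ * ‖z‖)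
    (S : X →L[ℝ] Y) (hS0 : 0 < ‖S‖) (hSη : ‖S‖ < η₀ / 8) (hS8 : ‖S‖ < 1/8)
    (σ : ℝ) (hσ0 : 0 < σ) (hσ8 : σ ≤ ‖S‖ / 8) :
    ‖f.smulRight y₀ + S‖ ≤ ‖f + ystar.comp S‖ + 2 * ρ * ‖S‖ + σ := by
  set T : X →L[ℝ] Y := f.smulRight y₀ with hT
  set g : StrongDual ℝ X := ystar.comp S with hg
  have hTn : ‖T‖ = 1 := by
    rw [hT, ContinuousLinearMap.norm_smulRight_apply, hf, hy₀, one_mul]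
  have hgS : ‖g‖ ≤ ‖S‖ := by
    calc ‖g‖ ≤ ‖ystar‖ * ‖S‖ := ContinuousLinearMap.opNorm_comp_le _ _
      _ ≤ 1 * ‖S‖ := mul_le_mul_of_nonneg_right hys1 (norm_nonneg S)
      _ = ‖S‖ := one_mul _
  -- lower bound on ‖T + S‖
  have hTS : 1 - ‖S‖ ≤ ‖T + S‖ := by
    have : ‖T‖ ≤ ‖T + S‖ + ‖S‖ := by
      calc ‖T‖ = ‖(T + S) - S‖ := by rw [add_sub_cancel_right]
        _ ≤ ‖T + S‖ + ‖S‖ := norm_sub_le _ _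
    linarith [hTn ▸ this]
  -- nearly norm attaining point
  have hlt : ‖T + S‖ - σ < ‖T + S‖ := by linarith
  obtain ⟨x, hx1, hx⟩ := (T + S).exists_lt_apply_of_lt_opNorm hlt
  have hx1' : ‖x‖ ≤ 1 := le_of_lt hx1
  set a : ℝ := f x + g x with haa
  set z : Y := S x - (g x) • y₀ with hzz
  have happ : (T + S) x = a • y₀ + z := by
    simp only [hT, hzz, haa, ContinuousLinearMap.add_apply,
      ContinuousLinearMap.smulRight_apply]
    module
  have hzs : ystar z = 0 := by
    simp only [hzz, map_sub, map_smul, hysy, smul_eq_mul, mul_one, hg,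
      ContinuousLinearMap.comp_apply]
    simp
  have hfx : |f x| ≤ 1 := by
    calc |f x| ≤ ‖f‖ * ‖x‖ := f.le_opNorm x
      _ ≤ 1 := by rw [hf]; linarith
  have hgx : |g x| ≤ ‖S‖ := by
    calc |g x| ≤ ‖g‖ * ‖x‖ := g.le_opNorm x
      _ ≤ ‖S‖ * 1 := mul_le_mul hgS hx1' (norm_nonneg x) (norm_nonneg S)
      _ = ‖S‖ := mul_one _
  have hSx : ‖S x‖ ≤ ‖S‖ := by
    calc ‖S x‖ ≤ ‖S‖ * ‖x‖ := S.le_opNorm x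
      _ ≤ ‖S‖ * 1 := mul_le_mul_of_nonneg_left hx1' (norm_nonneg S)
      _ = ‖S‖ := mul_one _
  have hzn : ‖z‖ ≤ 2 * ‖S‖ := by
    calc ‖z‖ ≤ ‖S x‖ + ‖(g x) • y₀‖ := norm_sub_le _ _
      _ = ‖S x‖ + |g x| := by rw [norm_smul, Real.norm_eq_abs, hy₀, mul_one]
      _ ≤ 2 * ‖S‖ := by linarith
  -- |a| is not small
  have haz : ‖(T+S) x‖ ≤ |a| + ‖z‖ := by
    rw [happ]
    calc ‖a • y₀ + z‖ ≤ ‖a • y₀‖ + ‖z‖ := norm_add_le _ _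
      _ = |a| + ‖z‖ := by rw [norm_smul, Real.norm_eq_abs, hy₀, mul_one]
  have halb : 1/2 < |a| := by
    have : ‖T + S‖ - σ < |a| + ‖z‖ := lt_of_lt_of_le hx haz
    linarith
  have ha0 : a ≠ 0 := by
    intro h
    rw [h, abs_zero] at halb
    linarith
  have hzlt : ‖z‖ < |a| * η₀ := by
    have h1 : ‖z‖ < η₀ / 4 := by linarith
    nlinarith
  have hmain : ‖a • y₀ + z‖ ≤ |a| + ρ * ‖z‖ :=
    smooth_bound y₀ ystar hys1 hysy ρ η₀ hsm a ha0 z hzs hzlt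
  have hafg : |a| ≤ ‖f + g‖ := by
    have : a = (f + g) x := by simp [haa]
    rw [this]
    calc |(f + g) x| ≤ ‖f + g‖ * ‖x‖ := (f + g).le_opNorm x
      _ ≤ ‖f + g‖ * 1 := mul_le_mul_of_nonneg_left hx1' (norm_nonneg _)
      _ = ‖f + g‖ := mul_one _
  have hρz : ρ * ‖z‖ ≤ 2 * ρ * ‖S‖ := by nlinarith
  have : ‖T + S‖ - σ < ‖f + g‖ + 2 * ρ * ‖S‖ := by
    calc ‖T + S‖ - σ < ‖(T+S) x‖ := hx
      _ = ‖a • y₀ + z‖ := by rw [happ]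
      _ ≤ |a| + ρ * ‖z‖ := hmain
      _ ≤ ‖f + g‖ + 2 * ρ * ‖S‖ := by linarith
  linarith

set_option maxHeartbeats 1000000 in
theorem stmt11
    (X Y : Type*) [NormedAddCommGroup X] [NormedSpace ℝ X] [CompleteSpace X] [Nontrivial X]
    [NormedAddCommGroup Y] [NormedSpace ℝ Y] [CompleteSpace Y] [Nontrivial Y]
    (H : Submodule ℝ (X →L[ℝ] Y)) (hHclosed : IsClosed (H : Set (X →L[ℝ] Y)))
    (hHfin : ∀ T : X →L[ℝ] Y, FiniteDimensional ℝ (LinearMap.range (T : X →ₗ[ℝ] Y)) → T ∈ H)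
    (δ : ℝ) (hδ : 0 < δ)
    (hH : IsRough H δ) (hY : NonRough Y) :
    IsRough (StrongDual ℝ X) δ := by
  intro f hf ε hε η hη
  by_cases hδε : δ ≤ ε
  · -- trivial case: (δ - ε) ≤ 0 and the quantity is always ≥ 0
    refine ⟨(η/2) • f, ?_, ?_, ?_⟩
    · rw [norm_smul, Real.norm_eq_abs, hf, mul_one, abs_of_pos (by linarith)]
      linarith
    · rw [norm_smul, Real.norm_eq_abs, hf, mul_one, abs_of_pos (by linarith)]
      linarith
    · have h1 : (0:ℝ) ≤ ‖f + (η/2) • f‖ + ‖f - (η/2) • f‖ - 2 := by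
        have : (2:ℝ) = ‖(f + (η/2) • f) + (f - (η/2) • f)‖ := by
          have : (f + (η/2) • f) + (f - (η/2) • f) = (2:ℝ) • f := by module
          rw [this, norm_smul, Real.norm_eq_abs, hf, mul_one]
          norm_num
        have h2 := norm_add_le (f + (η/2) • f) (f - (η/2) • f)
        linarith
      have h2 : (0:ℝ) ≤ ‖(η/2) • f‖ := norm_nonneg _
      nlinarith [norm_nonneg ((η/2) • f)]
  push_neg at hδε
  -- main case ε < δ
  set ρ : ℝ := ε / 16 with hρdef
  have hρpos : 0 < ρ := by positivity
  -- Y is not ρ-rough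
  have hYρ : ¬ IsRough Y ρ := fun h => hY ⟨ρ, hρpos, h⟩
  unfold IsRough at hYρ
  push_neg at hYρ
  obtain ⟨y₀, hy₀, ε₁, hε₁, η₀, hη₀, hP⟩ := hYρ
  have hsm : ∀ z : Y, ‖z‖ < η₀ → ‖y₀ + z‖ + ‖y₀ - z‖ ≤ 2 + ρ * ‖z‖ := by
    intro z hz
    rcases eq_or_lt_of_le (norm_nonneg z) with h0 | h0
    · have : z = 0 := by rwa [eq_comm, norm_eq_zero] at h0
      simp only [this, add_zero, sub_zero, norm_zero, hy₀, mul_zero]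
      norm_num
    · have := hP z h0 hz
      nlinarith [norm_nonneg z]
  -- support functional
  have hy₀ne : y₀ ≠ 0 := by
    intro h; rw [h, norm_zero] at hy₀; norm_num at hy₀
  obtain ⟨ystar, hysn, hysy⟩ := exists_dual_vector ℝ y₀ (norm_ne_zero_iff.mpr hy₀ne)
  rw [hy₀] at hysy
  simp only [RCLike.ofReal_one] at hysy
  have hys1 : ‖ystar‖ ≤ 1 := le_of_eq hysn
  -- the rank-one operator
  set T : X →L[ℝ] Y := f.smulRight y₀ with hTdef
  have hTn : ‖T‖ = 1 := by
    rw [hTdef, ContinuousLinearMap.norm_smulRight_apply, hf, hy₀, one_mul]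
  have hTH : T ∈ H := by
    apply hHfin
    have hle : LinearMap.range ((T : X →L[ℝ] Y) : X →ₗ[ℝ] Y) ≤ ℝ ∙ y₀ := by
      rintro _ ⟨x, rfl⟩
      exact Submodule.smul_mem _ _ (Submodule.mem_span_singleton_self y₀)
    exact Submodule.finiteDimensional_of_le hle
  set tH : H := ⟨T, hTH⟩ with htH
  have htHn : ‖tH‖ = 1 := hTn
  -- apply roughness of H
  set η' : ℝ := min η (min (η₀/8) (1/8)) with hη'def
  have hη'pos : 0 < η' := by
    apply lt_min hη
    exact lt_min (by positivity) (by norm_num)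
  obtain ⟨yH, hyH0, hyHη, hyHkey⟩ := hH tH htHn (ε/4) (by positivity) η' hη'pos
  set S : X →L[ℝ] Y := (yH : X →L[ℝ] Y) with hSdef
  have hSn : ‖S‖ = ‖yH‖ := rfl
  have hS0 : 0 < ‖S‖ := by rw [hSn]; exact hyH0
  have hSη' : ‖S‖ < η' := by rw [hSn]; exact hyHη
  have hSη₀ : ‖S‖ < η₀ / 8 :=
    lt_of_lt_of_le hSη' (le_trans (min_le_right _ _) (min_le_left _ _))
  have hS8 : ‖S‖ < 1/8 :=
    lt_of_lt_of_le hSη' (le_trans (min_le_right _ _) (min_le_right _ _))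
  have hSηη : ‖S‖ < η := lt_of_lt_of_le hSη' (min_le_left _ _)
  -- translate key inequality to ambient norms
  have hkey : (δ - ε/4) * ‖S‖ ≤ ‖T + S‖ + ‖T - S‖ - 2 := by
    have h1 : ‖tH + yH‖ = ‖T + S‖ := rfl
    have h2 : ‖tH - yH‖ = ‖T - S‖ := rfl
    rw [hSn, ← h1, ← h2]
    exact hyHkey
  set g : StrongDual ℝ X := ystar.comp S with hgdef
  have hgS : ‖g‖ ≤ ‖S‖ := by
    calc ‖g‖ ≤ ‖ystar‖ * ‖S‖ := ContinuousLinearMap.opNorm_comp_le _ _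
      _ ≤ 1 * ‖S‖ := mul_le_mul_of_nonneg_right hys1 (norm_nonneg S)
      _ = ‖S‖ := one_mul _
  set σ : ℝ := (min ε 1) / 8 * ‖S‖ with hσdef
  have hσ0 : 0 < σ := by
    apply mul_pos _ hS0
    have : 0 < min ε 1 := lt_min hε one_pos
    linarith
  have hσ8 : σ ≤ ‖S‖ / 8 := by
    have : min ε 1 ≤ 1 := min_le_right _ _
    rw [hσdef]
    nlinarith [hS0.le]
  have hσε : σ ≤ ε / 8 * ‖S‖ := by
    have : min ε 1 ≤ ε := min_le_left _ _
    rw [hσdef]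
    nlinarith [hS0.le]
  -- plus side
  have hplus : ‖T + S‖ ≤ ‖f + g‖ + 2 * ρ * ‖S‖ + σ :=
    side_bound f hf y₀ hy₀ ystar hys1 hysy ρ η₀ hρpos.le hη₀
      hsm S hS0 hSη₀ hS8 σ hσ0 hσ8
  -- minus side, via -S
  have hminus : ‖T - S‖ ≤ ‖f - g‖ + 2 * ρ * ‖S‖ + σ := by
    have hnS : ‖(-S : X →L[ℝ] Y)‖ = ‖S‖ := norm_neg S
    have h := side_bound f hf y₀ hy₀ ystar hys1 hysy ρ η₀ hρpos.le hη₀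
      hsm (-S) (by rwa [hnS]) (by rwa [hnS]) (by rwa [hnS]) σ hσ0 (by rwa [hnS])
    have h1 : T + (-S) = T - S := (sub_eq_add_neg T S).symm
    have h2 : ystar.comp (-S) = -g := by
      ext x; simp [hgdef]
    have h3 : f + -g = f - g := (sub_eq_add_neg f g).symm
    rw [h1, h2, h3, hnS] at h
    exact h
  -- assemble
  have hsum : 2 + (δ - 3*ε/4) * ‖S‖ ≤ ‖f + g‖ + ‖f - g‖ := by
    have h4ρ : 4 * ρ * ‖S‖ = ε/4 * ‖S‖ := by rw [hρdef]; ring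
    linarith [hkey, hplus, hminus, hσε]
  have hg0 : 0 < ‖g‖ := by
    rcases eq_or_lt_of_le (norm_nonneg g) with h0 | h0
    · exfalso
      have : g = 0 := by rwa [eq_comm, norm_eq_zero] at h0
      rw [this, add_zero, sub_zero, hf] at hsum
      have hpos : 0 < (δ - 3*ε/4) * ‖S‖ := mul_pos (by linarith) hS0
      linarith
    · exact h0
  refine ⟨g, hg0, lt_of_le_of_lt hgS hSηη, ?_⟩
  have h1 : (δ - ε) * ‖g‖ ≤ (δ - ε) * ‖S‖ :=
    mul_le_mul_of_nonneg_left hgS (by linarith)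
  have h2 : (δ - ε) * ‖S‖ ≤ (δ - 3*ε/4) * ‖S‖ :=
    mul_le_mul_of_nonneg_right (by linarith) hS0.le
  linarith
end

section
/- Let X and Y be nontrivial real Banach spaces, and let H be a closed linear subspace of L(X,Y) containing all finite rank operators. Suppose the dual space X* is non-rough and alternatively octahedral. Then H (with the induced operator norm) is octahedral if and only if Y is octahedral. -/
open scoped BigOperators

lemma slice_of_nonRough {X : Type*} [NormedAddCommGroup X] [NormedSpace ℝ X]
    (h : NonRough (StrongDual ℝ X)) {δ : ℝ} (hδ : 0 < δ) :
    ∃ f : StrongDual ℝ X, ‖f‖ = 1 ∧ ∃ α > (0:ℝ), ∀ x x' : X, ‖x‖ ≤ 1 → ‖x'‖ ≤ 1 →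
      1 - α < f x → 1 - α < f x' → ‖x - x'‖ ≤ 2 * δ := by
  have h2 : ¬ IsRough (StrongDual ℝ X) δ := fun hr => h ⟨δ, hδ, hr⟩
  unfold IsRough at h2
  push_neg at h2
  obtain ⟨f, hf, ε, hε, η, hη, hkey⟩ := h2
  refine ⟨f, hf, δ * η / 4, by positivity, ?_⟩
  intro x x' hx hx' hfx hfx'
  set α := δ * η / 4 with hα
  have claim1 : ∀ u : StrongDual ℝ X, u (x - x') ≤ 2 * δ * ‖u‖ := by
    intro u
    rcases eq_or_ne u 0 with rfl | hu
    · simp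
    · have hunorm : 0 < ‖u‖ := norm_pos_iff.2 hu
      set g : StrongDual ℝ X := (η / (2 * ‖u‖)) • u with hg
      have hgnorm : ‖g‖ = η / 2 := by
        rw [hg, norm_smul, Real.norm_eq_abs, abs_of_pos (by positivity)]
        field_simp
      have hk := hkey g (by rw [hgnorm]; positivity) (by rw [hgnorm]; linarith)
      have hk2 : ‖f + g‖ + ‖f - g‖ - 2 < δ * (η / 2) := by
        have : (δ - ε) * ‖g‖ ≤ δ * (η / 2) := by
          rw [hgnorm]
          nlinarith
        linarith
      have e1 : (f + g) x ≤ ‖f + g‖ := by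
        calc (f + g) x ≤ ‖(f + g) x‖ := le_abs_self _
        _ ≤ ‖f + g‖ * ‖x‖ := (f + g).le_opNorm x
        _ ≤ ‖f + g‖ * 1 := by
            have := norm_nonneg (f + g); nlinarith
        _ = ‖f + g‖ := mul_one _
      have e2 : (f - g) x' ≤ ‖f - g‖ := by
        calc (f - g) x' ≤ ‖(f - g) x'‖ := le_abs_self _
        _ ≤ ‖f - g‖ * ‖x'‖ := (f - g).le_opNorm x'
        _ ≤ ‖f - g‖ * 1 := by
            have := norm_nonneg (f - g); nlinarith
        _ = ‖f - g‖ := mul_one _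
      have hs : g x - g x' < δ * η := by
        have expand : (f + g) x + (f - g) x' = (f x + f x') + (g x - g x') := by
          simp only [ContinuousLinearMap.add_apply, ContinuousLinearMap.sub_apply]; ring
        linarith [e1, e2, hk2, hfx, hfx']
      have hgval : g (x - x') = (η / (2 * ‖u‖)) * u (x - x') := by
        rw [hg]; simp
      have hgsub : g (x - x') = g x - g x' := map_sub g x x'
      have key : (η / (2 * ‖u‖)) * u (x - x') < δ * η := by
        rw [← hgval, hgsub]; exact hs
      have h3 : u (x - x') = (2 * ‖u‖ / η) * ((η / (2 * ‖u‖)) * u (x - x')) := by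
        field_simp
      calc u (x - x') = (2 * ‖u‖ / η) * ((η / (2 * ‖u‖)) * u (x - x')) := h3
        _ ≤ (2 * ‖u‖ / η) * (δ * η) := le_of_lt (mul_lt_mul_of_pos_left key (by positivity))
        _ = 2 * δ * ‖u‖ := by field_simp
  have claim2 : ∀ u : StrongDual ℝ X, ‖u (x - x')‖ ≤ 2 * δ * ‖u‖ := by
    intro u
    rw [Real.norm_eq_abs, abs_le]
    constructor
    · have := claim1 (-u)
      simp only [ContinuousLinearMap.neg_apply, norm_neg] at this
      linarith
    · exact claim1 u
  exact NormedSpace.norm_le_dual_bound ℝ (x - x') (by positivity) claim2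

lemma smulRight_finrank {X Y : Type*} [NormedAddCommGroup X] [NormedSpace ℝ X]
    [NormedAddCommGroup Y] [NormedSpace ℝ Y] (f : X →L[ℝ] ℝ) (y : Y) :
    FiniteDimensional ℝ (LinearMap.range ((f.smulRight y : X →L[ℝ] Y) : X →ₗ[ℝ] Y)) := by
  have hle : LinearMap.range ((f.smulRight y : X →L[ℝ] Y) : X →ₗ[ℝ] Y) ≤ ℝ ∙ y := by
    rintro v ⟨x, rfl⟩
    exact Submodule.mem_span_singleton.2 ⟨f x, rfl⟩
  exact Submodule.finiteDimensional_of_le hle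

lemma pair_points {X : Type*} [NormedAddCommGroup X] [NormedSpace ℝ X]
    (f g : StrongDual ℝ X) (hf : ‖f‖ ≤ 1) (hg : ‖g‖ ≤ 1) {c : ℝ} (hc : c < ‖f + g‖) :
    ∃ z : X, ‖z‖ ≤ 1 ∧ c - 1 < f z ∧ c - 1 < g z := by
  obtain ⟨z0, hz0, hz0v⟩ := (f + g).exists_lt_apply_of_lt_opNorm hc
  have hfle : ∀ w : X, ‖w‖ ≤ 1 → f w ≤ 1 := by
    intro w hw
    calc f w ≤ ‖f w‖ := le_abs_self _
      _ ≤ ‖f‖ := f.unit_le_opNorm w hw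
      _ ≤ 1 := hf
  have hgle : ∀ w : X, ‖w‖ ≤ 1 → g w ≤ 1 := by
    intro w hw
    calc g w ≤ ‖g w‖ := le_abs_self _
      _ ≤ ‖g‖ := g.unit_le_opNorm w hw
      _ ≤ 1 := hg
  have hfgz : ‖(f + g) z0‖ = |f z0 + g z0| := by
    rw [ContinuousLinearMap.add_apply, Real.norm_eq_abs]
  rcases le_or_gt 0 ((f + g) z0) with hs | hs
  · have hv : c < f z0 + g z0 := by
      rw [hfgz, abs_of_nonneg (by simpa using hs)] at hz0v
      exact hz0v
    exact ⟨z0, le_of_lt hz0, by linarith [hgle z0 (le_of_lt hz0)],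
      by linarith [hfle z0 (le_of_lt hz0)]⟩
  · have hv : c < f (-z0) + g (-z0) := by
      rw [hfgz, abs_of_neg (by simpa using hs)] at hz0v
      rw [map_neg, map_neg]
      linarith
    have hz0n : ‖-z0‖ ≤ 1 := by rw [norm_neg]; exact le_of_lt hz0
    exact ⟨-z0, hz0n, by linarith [hgle (-z0) hz0n], by linarith [hfle (-z0) hz0n]⟩

set_option maxHeartbeats 2000000 in
theorem stmt12
    (X Y : Type*) [NormedAddCommGroup X] [NormedSpace ℝ X] [CompleteSpace X] [Nontrivial X]
    [NormedAddCommGroup Y] [NormedSpace ℝ Y] [CompleteSpace Y] [Nontrivial Y]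
    (H : Submodule ℝ (X →L[ℝ] Y)) (hHclosed : IsClosed (H : Set (X →L[ℝ] Y)))
    (hHfin : ∀ T : X →L[ℝ] Y, FiniteDimensional ℝ (LinearMap.range (T : X →ₗ[ℝ] Y)) → T ∈ H)
    
    (hX1 : NonRough (StrongDual ℝ X)) (hX2 : AlternativelyOctahedral (StrongDual ℝ X)) :
    (Octahedral H ↔ Octahedral Y) := by
  constructor
  · -- H octahedral → Y octahedral
    intro hH n ys hys ε hε
    rcases Nat.eq_zero_or_pos n with hn | hn
    · subst hn
      obtain ⟨v, hv⟩ := exists_ne (0 : Y)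
      exact ⟨‖v‖⁻¹ • v, norm_smul_inv_norm hv, fun i => i.elim0⟩
    obtain ⟨f, hf, α0, hα0, hslice⟩ := slice_of_nonRough hX1 (show (0:ℝ) < ε/8 by linarith)
    set α := min α0 (min (ε/8) (1/2)) with hαdef
    have hα : 0 < α := lt_min hα0 (lt_min (by linarith) (by norm_num))
    have hαa : α ≤ α0 := min_le_left _ _
    have hαe : α ≤ ε/8 := le_trans (min_le_right _ _) (min_le_left _ _)
    have hαh : α ≤ 1/2 := le_trans (min_le_right _ _) (min_le_right _ _)
    have hmem : ∀ i, f.smulRight (ys i) ∈ H := fun i => hHfin _ (smulRight_finrank f (ys i))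
    set T : Fin n → H := fun i => ⟨f.smulRight (ys i), hmem i⟩ with hT
    have hTnorm : ∀ i, ‖T i‖ = 1 := by
      intro i
      show ‖f.smulRight (ys i)‖ = 1
      rw [ContinuousLinearMap.norm_smulRight_apply, hf, hys i, one_mul]
    obtain ⟨S, hS1, hS2⟩ := hH n T hTnorm (α/2) (by linarith)
    have hS1' : ‖(S : X →L[ℝ] Y)‖ = 1 := hS1
    -- extract near-norming points
    have hpt : ∀ i, ∃ x : X, ‖x‖ < 1 ∧ 2 - α < ‖f x • ys i + (S : X →L[ℝ] Y) x‖ := by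
      intro i
      have h1 : (2 : ℝ) - α < ‖f.smulRight (ys i) + (S : X →L[ℝ] Y)‖ := by
        have := hS2 i
        have hc : ‖T i + S‖ = ‖f.smulRight (ys i) + (S : X →L[ℝ] Y)‖ := rfl
        rw [hc] at this
        linarith
      obtain ⟨x, hx1, hx2⟩ := (f.smulRight (ys i) + (S : X →L[ℝ] Y)).exists_lt_apply_of_lt_opNorm h1
      exact ⟨x, hx1, by simpa using hx2⟩
    choose x hx1 hx2 using hpt
    set w : Fin n → X := fun i => if 0 ≤ f (x i) then x i else -(x i) with hw
    have hwnorm : ∀ i, ‖w i‖ ≤ 1 := by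
      intro i
      rcases le_or_gt 0 (f (x i)) with hc | hc
      · rw [show w i = x i from if_pos hc]; exact le_of_lt (hx1 i)
      · rw [show w i = -x i from if_neg (not_le.2 hc), norm_neg]; exact le_of_lt (hx1 i)
    have hwval : ∀ i, 2 - α < ‖f (w i) • ys i + (S : X →L[ℝ] Y) (w i)‖ := by
      intro i
      rcases le_or_gt 0 (f (x i)) with hc | hc
      · rw [show w i = x i from if_pos hc]; exact hx2 i
      · rw [show w i = -x i from if_neg (not_le.2 hc)]
        have hneg : f (-x i) • ys i + (S : X →L[ℝ] Y) (-x i)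
            = -(f (x i) • ys i + (S : X →L[ℝ] Y) (x i)) := by
          rw [map_neg, map_neg, neg_smul, neg_add]
        rw [hneg, norm_neg]
        exact hx2 i
    have hSw_le : ∀ i, ‖(S : X →L[ℝ] Y) (w i)‖ ≤ 1 := by
      intro i
      have := (S : X →L[ℝ] Y).unit_le_opNorm (w i) (hwnorm i)
      rw [hS1'] at this; exact this
    have hfw_le : ∀ i, f (w i) ≤ 1 := by
      intro i
      have h := f.unit_le_opNorm (w i) (hwnorm i)
      rw [hf] at h
      calc f (w i) ≤ ‖f (w i)‖ := le_abs_self _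
        _ ≤ 1 := h
    have hfw : ∀ i, 1 - α < f (w i) := by
      intro i
      have h0 : 0 ≤ f (w i) := by
        rcases le_or_gt 0 (f (x i)) with hc | hc
        · rw [show w i = x i from if_pos hc]; exact hc
        · rw [show w i = -x i from if_neg (not_le.2 hc), map_neg]; linarith
      have h1 : ‖f (w i) • ys i + (S : X →L[ℝ] Y) (w i)‖ ≤ f (w i) + 1 := by
        calc ‖f (w i) • ys i + (S : X →L[ℝ] Y) (w i)‖
            ≤ ‖f (w i) • ys i‖ + ‖(S : X →L[ℝ] Y) (w i)‖ := norm_add_le _ _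
          _ ≤ f (w i) + 1 := by
              rw [norm_smul, Real.norm_eq_abs, abs_of_nonneg h0, hys i, mul_one]
              linarith [hSw_le i]
      linarith [hwval i, hα]
    have hSw : ∀ i, 1 - α < ‖(S : X →L[ℝ] Y) (w i)‖ := by
      intro i
      have h1 : ‖f (w i) • ys i + (S : X →L[ℝ] Y) (w i)‖
          ≤ 1 + ‖(S : X →L[ℝ] Y) (w i)‖ := by
        calc ‖f (w i) • ys i + (S : X →L[ℝ] Y) (w i)‖
            ≤ ‖f (w i) • ys i‖ + ‖(S : X →L[ℝ] Y) (w i)‖ := norm_add_le _ _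
          _ ≤ 1 + ‖(S : X →L[ℝ] Y) (w i)‖ := by
              rw [norm_smul, Real.norm_eq_abs, hys i, mul_one]
              have := hfw_le i
              have h0 := abs_le.2 ⟨by linarith [hfw i, hα, hαh], this⟩
              linarith [h0]
      linarith [hwval i, hα]
    set i0 : Fin n := ⟨0, hn⟩ with hi0
    set z : Y := (S : X →L[ℝ] Y) (w i0) with hz
    have hznorm : 1 - α < ‖z‖ := hSw i0
    have hzle : ‖z‖ ≤ 1 := hSw_le i0
    have hzne : z ≠ 0 := by
      intro h0
      rw [h0, norm_zero] at hznorm; linarith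
    refine ⟨‖z‖⁻¹ • z, norm_smul_inv_norm hzne, ?_⟩
    intro i
    have hclose : ‖w i - w i0‖ ≤ 2 * (ε/8) :=
      hslice (w i) (w i0) (hwnorm i) (hwnorm i0)
        (lt_of_le_of_lt (by linarith) (hfw i))
        (lt_of_le_of_lt (by linarith) (hfw i0))
    have e1 : ‖(S : X →L[ℝ] Y) (w i) - z‖ ≤ ε/4 := by
      rw [hz, ← map_sub]
      have := (S : X →L[ℝ] Y).le_opNorm (w i - w i0)
      rw [hS1', one_mul] at this
      linarith
    have e2 : ‖z - ‖z‖⁻¹ • z‖ < α := by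
      have : z - ‖z‖⁻¹ • z = (1 - ‖z‖⁻¹) • z := by
        rw [sub_smul, one_smul]
      rw [this, norm_smul, Real.norm_eq_abs]
      have hzpos : 0 < ‖z‖ := by linarith
      have : |1 - ‖z‖⁻¹| * ‖z‖ = |‖z‖ - 1| := by
        rw [← abs_of_pos hzpos, ← abs_mul]
        congr 1
        field_simp
        rw [abs_of_pos hzpos]; ring
      rw [this, abs_of_nonpos (by linarith), neg_sub]
      linarith
    have e3 : ‖(f (w i) - 1) • ys i‖ < α := by
      rw [norm_smul, Real.norm_eq_abs, hys i, mul_one, abs_of_nonpos (by linarith [hfw_le i])]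
      linarith [hfw i]
    have split : ys i + ‖z‖⁻¹ • z =
        (f (w i) • ys i + (S : X →L[ℝ] Y) (w i)) - (f (w i) - 1) • ys i
          - ((S : X →L[ℝ] Y) (w i) - z) - (z - ‖z‖⁻¹ • z) := by
      rw [sub_smul, one_smul]; abel
    calc (2:ℝ) - ε ≤ (2 - α) - α - ε/4 - α := by linarith
      _ ≤ ‖f (w i) • ys i + (S : X →L[ℝ] Y) (w i)‖ - ‖(f (w i) - 1) • ys i‖
          - ‖(S : X →L[ℝ] Y) (w i) - z‖ - ‖z - ‖z‖⁻¹ • z‖ := by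
            linarith [hwval i, e1, e2, e3]
      _ ≤ ‖ys i + ‖z‖⁻¹ • z‖ := by
            rw [split]
            have := norm_sub_norm_le ((f (w i) • ys i + (S : X →L[ℝ] Y) (w i)) - (f (w i) - 1) • ys i - ((S : X →L[ℝ] Y) (w i) - z)) (z - ‖z‖⁻¹ • z)
            have h2 := norm_sub_norm_le ((f (w i) • ys i + (S : X →L[ℝ] Y) (w i)) - (f (w i) - 1) • ys i) ((S : X →L[ℝ] Y) (w i) - z)
            have h3 := norm_sub_norm_le (f (w i) • ys i + (S : X →L[ℝ] Y) (w i)) ((f (w i) - 1) • ys i)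
            linarith
  · -- Y octahedral → H octahedral
    intro hY n Ts hTs ε hε
    set δ := min (ε/8) (1/2) with hδdef
    have hδ0 : 0 < δ := lt_min (by linarith) (by norm_num)
    have hδe : δ ≤ ε/8 := min_le_left _ _
    have hδh : δ ≤ 1/2 := min_le_right _ _
    set ε₁ := min (ε/16) (1/8) with hε₁def
    have hε₁0 : 0 < ε₁ := lt_min (by linarith) (by norm_num)
    have hε₁e : ε₁ ≤ ε/16 := min_le_left _ _
    have hε₁h : ε₁ ≤ 1/8 := min_le_right _ _
    have hTs' : ∀ i, ‖(Ts i : X →L[ℝ] Y)‖ = 1 := fun i => hTs i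
    have h1 : ∀ i, ∃ x : X, ‖x‖ < 1 ∧ 1 - δ < ‖(Ts i : X →L[ℝ] Y) x‖ := by
      intro i
      have : (1:ℝ) - δ < ‖(Ts i : X →L[ℝ] Y)‖ := by rw [hTs' i]; linarith
      exact (Ts i : X →L[ℝ] Y).exists_lt_apply_of_lt_opNorm this
    choose x hx1 hx2 using h1
    have hTx_ne : ∀ i, (Ts i : X →L[ℝ] Y) (x i) ≠ 0 := by
      intro i h0
      have := hx2 i
      rw [h0, norm_zero] at this
      linarith
    choose h hh1 hh2 using fun i => exists_dual_vector ℝ ((Ts i : X →L[ℝ] Y) (x i)) (norm_ne_zero_iff.2 (hTx_ne i))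
    set φ : Fin n → StrongDual ℝ X := fun i => (h i).comp (Ts i : X →L[ℝ] Y) with hφdef
    have hφ_le : ∀ i, ‖φ i‖ ≤ 1 := by
      intro i
      calc ‖φ i‖ ≤ ‖h i‖ * ‖(Ts i : X →L[ℝ] Y)‖ := (h i).opNorm_comp_le _
        _ = 1 := by rw [hh1 i, hTs' i, one_mul]
    have hφx : ∀ i, 1 - δ < φ i (x i) := by
      intro i
      have e : φ i (x i) = ‖(Ts i : X →L[ℝ] Y) (x i)‖ := by
        have := hh2 i
        exact_mod_cast this
      rw [e]; exact hx2 i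
    have hφ_lb : ∀ i, 1 - δ < ‖φ i‖ := by
      intro i
      have h2 : φ i (x i) ≤ ‖φ i‖ := by
        calc φ i (x i) ≤ ‖φ i (x i)‖ := le_abs_self _
          _ ≤ ‖φ i‖ := (φ i).unit_le_opNorm (x i) (le_of_lt (hx1 i))
      linarith [hφx i]
    have hφ_ne : ∀ i, φ i ≠ 0 := by
      intro i h0
      have := hφ_lb i
      rw [h0, norm_zero] at this
      linarith
    set fs : Fin n → StrongDual ℝ X := fun i => ‖φ i‖⁻¹ • φ i with hfsdef
    have hfs : ∀ i, ‖fs i‖ = 1 := fun i => norm_smul_inv_norm (hφ_ne i)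
    obtain ⟨g, hg, hgmax⟩ := hX2 n fs hfs ε₁ hε₁0
    have h2 : ∀ i, ∃ σ : ℝ, (σ = 1 ∨ σ = -1) ∧ ∃ z : X, ‖z‖ ≤ 1 ∧
        1 - 2*ε₁ < fs i z ∧ 1 - 2*ε₁ < σ * g z := by
      intro i
      have hmax : 2 - 2*ε₁ < max ‖fs i + g‖ ‖fs i - g‖ := by linarith [hgmax i]
      rcases lt_max_iff.1 hmax with hcase | hcase
      · obtain ⟨z, hza, hzb, hzc⟩ := pair_points (fs i) g (le_of_eq (hfs i)) (le_of_eq hg) hcase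
        exact ⟨1, Or.inl rfl, z, hza, by linarith, by rw [one_mul]; linarith⟩
      · rw [sub_eq_add_neg] at hcase
        obtain ⟨z, hza, hzb, hzc⟩ := pair_points (fs i) (-g) (le_of_eq (hfs i))
          (by rw [norm_neg]; exact le_of_eq hg) hcase
        refine ⟨-1, Or.inr rfl, z, hza, by linarith, ?_⟩
        have : (-g) z = -1 * g z := by simp
        rw [← this]; linarith
    choose σ hσ z hz1 hz2 hz3 using h2
    have hσ_abs : ∀ i, |σ i| = 1 := by
      intro i; rcases hσ i with hh | hh <;> rw [hh] <;> norm_num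
    set u : Fin n → Y := fun i => (Ts i : X →L[ℝ] Y) (z i) with hudef
    have hr_le : ∀ i, ‖u i‖ ≤ 1 := by
      intro i
      have := (Ts i : X →L[ℝ] Y).unit_le_opNorm (z i) (hz1 i)
      rw [hTs' i] at this
      exact this
    have hr_lb : ∀ i, (1-δ) * (1 - 2*ε₁) < ‖u i‖ := by
      intro i
      have hne : ‖φ i‖ ≠ 0 := norm_ne_zero_iff.2 (hφ_ne i)
      have e1 : φ i (z i) = ‖φ i‖ * fs i (z i) := by
        have hfseq : fs i (z i) = ‖φ i‖⁻¹ * φ i (z i) := rfl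
        rw [hfseq, ← mul_assoc, mul_inv_cancel₀ hne, one_mul]
      have e3 : φ i (z i) ≤ ‖u i‖ := by
        have e2 : φ i (z i) = h i (u i) := rfl
        rw [e2]
        calc h i (u i) ≤ ‖h i (u i)‖ := le_abs_self _
          _ ≤ ‖h i‖ * ‖u i‖ := (h i).le_opNorm _
          _ = ‖u i‖ := by rw [hh1 i, one_mul]
      have hprod : (1-δ) * (1 - 2*ε₁) < ‖φ i‖ * fs i (z i) := by
        have b1 := hφ_lb i
        have b2 := hz2 i
        nlinarith [hδh, hε₁h]
      rw [e1] at e3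
      linarith
    have hu_ne : ∀ i, ‖u i‖ ≠ 0 := by
      intro i
      have := hr_lb i
      have hp : (0:ℝ) < (1-δ) * (1 - 2*ε₁) := by nlinarith [hδh, hε₁h]
      intro h0; rw [h0] at this; linarith
    set v : Fin n → Y := fun i => (σ i * ‖u i‖⁻¹) • u i with hvdef
    have hv : ∀ i, ‖v i‖ = 1 := by
      intro i
      rw [hvdef]
      simp only []
      rw [norm_smul, Real.norm_eq_abs, abs_mul, hσ_abs i, one_mul, abs_inv,
        abs_of_nonneg (norm_nonneg _), inv_mul_cancel₀ (hu_ne i)]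
    obtain ⟨y, hy, hvy⟩ := hY n v hv (ε/8) (by linarith)
    set S0 := g.smulRight y with hS0def
    have hS0 : ‖S0‖ = 1 := by
      rw [hS0def, ContinuousLinearMap.norm_smulRight_apply, hg, hy, one_mul]
    have hS0mem : S0 ∈ H := hHfin _ (smulRight_finrank g y)
    refine ⟨⟨S0, hS0mem⟩, hS0, ?_⟩
    intro i
    have hcoe : ‖Ts i + (⟨S0, hS0mem⟩ : H)‖ = ‖(Ts i : X →L[ℝ] Y) + S0‖ := rfl
    rw [hcoe]
    have hzn : ‖σ i • z i‖ ≤ 1 := by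
      rw [norm_smul, Real.norm_eq_abs, hσ_abs i, one_mul]; exact hz1 i
    have happ := ((Ts i : X →L[ℝ] Y) + S0).unit_le_opNorm (σ i • z i) hzn
    have hval : ((Ts i : X →L[ℝ] Y) + S0) (σ i • z i) = σ i • u i + (σ i * g (z i)) • y := by
      rw [ContinuousLinearMap.add_apply, map_smul, hS0def,
        ContinuousLinearMap.smulRight_apply, map_smul]
      congr 1
    set c := σ i * g (z i) with hcdef
    have hc_lb : 1 - 2*ε₁ < c := hz3 i
    have hc_ub : c ≤ 1 := by
      calc c ≤ |σ i * g (z i)| := le_abs_self _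
        _ = |g (z i)| := by rw [abs_mul, hσ_abs i, one_mul]
        _ = ‖g (z i)‖ := rfl
        _ ≤ ‖g‖ := g.unit_le_opNorm (z i) (hz1 i)
        _ = 1 := hg
    have hsv : σ i • u i = ‖u i‖ • v i := by
      rw [hvdef]
      simp only []
      rw [smul_smul, mul_comm (σ i) (‖u i‖⁻¹), ← mul_assoc,
        mul_inv_cancel₀ (hu_ne i), one_mul]
    have key : 2 - ε ≤ ‖σ i • u i + c • y‖ := by
      have decomp : σ i • u i + c • y = (v i + y) - (1 - ‖u i‖) • v i - (1 - c) • y := by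
        rw [hsv, sub_smul, sub_smul, one_smul, one_smul]; abel
      rw [decomp]
      have n1 : ‖(1 - ‖u i‖) • v i‖ ≤ δ + 2*ε₁ := by
        rw [norm_smul, Real.norm_eq_abs, hv i, mul_one,
          abs_of_nonneg (by linarith [hr_le i])]
        nlinarith [hr_lb i, hδ0, hε₁0]
      have n2 : ‖(1 - c) • y‖ ≤ 2*ε₁ := by
        rw [norm_smul, Real.norm_eq_abs, hy, mul_one, abs_of_nonneg (by linarith)]
        linarith
      have t1 := norm_sub_norm_le ((v i + y) - (1 - ‖u i‖) • v i) ((1 - c) • y)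
      have t2 := norm_sub_norm_le (v i + y) ((1 - ‖u i‖) • v i)
      have t3 := hvy i
      linarith [hδe, hε₁e]
    calc (2:ℝ) - ε ≤ ‖((Ts i : X →L[ℝ] Y) + S0) (σ i • z i)‖ := by rw [hval]; exact key
      _ ≤ ‖(Ts i : X →L[ℝ] Y) + S0‖ := happ
end

section
/- Let X be a nontrivial real Banach space and δ > 0. Then X is weakly δ-average rough if and only if the following holds: whenever n ∈ ℕ, x₁,…,xₙ are in the unit sphere S_X, x* is in the closed unit ball B_{X*} of the dual, and ε > 0 and t₀ > 0, there is y ∈ S_X such that inf over i ∈ {1,…,n} and t ≥ t₀ of (‖xᵢ+ty‖ − x*(xᵢ))/t, minus sup over i ∈ {1,…,n} and t ≥ t₀ of (‖xᵢ−ty‖ − x*(xᵢ))/(−t), is greater than δ − ε. -/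
open Metric Set Pointwise
namespace WARAux


variable {X : Type*} [NormedAddCommGroup X] [NormedSpace ℝ X]

/-- Term set defining the sublinear functional used in the Hahn–Banach step. -/
def pset {m : ℕ} (v : Fin m → X) (f : StrongDual ℝ X) (a : ℝ) (z : X) : Set ℝ :=
  {r | ∃ l : Fin m → ℝ, (∀ j, 0 ≤ l j) ∧
    r = ‖z + ∑ j, l j • v j‖ - ∑ j, l j * (f (v j) - a)}

noncomputable def pfun {m : ℕ} (v : Fin m → X) (f : StrongDual ℝ X) (a : ℝ) (z : X) : ℝ :=
  sInf (pset v f a z)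

lemma pset_nonempty {m : ℕ} (v : Fin m → X) (f : StrongDual ℝ X) (a : ℝ) (z : X) :
    (pset v f a z).Nonempty := by
  refine ⟨‖z‖, fun _ => 0, fun j => le_rfl, by simp⟩

lemma le_of_mem_pset {m : ℕ} {v : Fin m → X} {f : StrongDual ℝ X} {a : ℝ} {z : X}
    (hf : ‖f‖ ≤ 1) (ha : 0 ≤ a) {r : ℝ} (hr : r ∈ pset v f a z) : f z ≤ r := by
  obtain ⟨l, hl, rfl⟩ := hr
  have hsum : ∑ j, l j * (f (v j) - a) = f (∑ j, l j • v j) - a * ∑ j, l j := by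
    rw [map_sum, Finset.mul_sum, ← Finset.sum_sub_distrib]
    refine Finset.sum_congr rfl fun j _ => ?_
    rw [map_smul, smul_eq_mul]; ring
  rw [hsum]
  have h1 : f z + f (∑ j, l j • v j) ≤ ‖z + ∑ j, l j • v j‖ := by
    have hb := f.le_opNorm (z + ∑ j, l j • v j)
    rw [Real.norm_eq_abs] at hb
    have habs := le_abs_self (f z + f (∑ j, l j • v j))
    have h1m : ‖f‖ * ‖z + ∑ j, l j • v j‖ ≤ 1 * ‖z + ∑ j, l j • v j‖ :=
      mul_le_mul_of_nonneg_right hf (norm_nonneg _)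
    rw [map_add] at hb
    rw [one_mul] at h1m
    linarith
  have h2 : 0 ≤ a * ∑ j, l j :=
    mul_nonneg ha (Finset.sum_nonneg fun j _ => hl j)
  linarith

lemma pset_bddBelow {m : ℕ} {v : Fin m → X} {f : StrongDual ℝ X} {a : ℝ} (z : X)
    (hf : ‖f‖ ≤ 1) (ha : 0 ≤ a) : BddBelow (pset v f a z) :=
  ⟨f z, fun _ hr => le_of_mem_pset hf ha hr⟩

lemma le_pfun {m : ℕ} {v : Fin m → X} {f : StrongDual ℝ X} {a : ℝ} (z : X)
    (hf : ‖f‖ ≤ 1) (ha : 0 ≤ a) : f z ≤ pfun v f a z :=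
  le_csInf (pset_nonempty v f a z) fun _ hr => le_of_mem_pset hf ha hr

lemma pfun_le {m : ℕ} {v : Fin m → X} {f : StrongDual ℝ X} {a : ℝ} {z : X}
    (hf : ‖f‖ ≤ 1) (ha : 0 ≤ a) {r : ℝ} (hr : r ∈ pset v f a z) : pfun v f a z ≤ r :=
  csInf_le (pset_bddBelow z hf ha) hr

lemma pfun_le_norm {m : ℕ} {v : Fin m → X} {f : StrongDual ℝ X} {a : ℝ} (z : X)
    (hf : ‖f‖ ≤ 1) (ha : 0 ≤ a) : pfun v f a z ≤ ‖z‖ :=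
  pfun_le hf ha ⟨fun _ => 0, fun j => le_rfl, by simp⟩

lemma pfun_add {m : ℕ} {v : Fin m → X} {f : StrongDual ℝ X} {a : ℝ}
    (hf : ‖f‖ ≤ 1) (ha : 0 ≤ a) (z w : X) :
    pfun v f a (z + w) ≤ pfun v f a z + pfun v f a w := by
  have key : ∀ r ∈ pset v f a z, ∀ s ∈ pset v f a w, pfun v f a (z + w) ≤ r + s := by
    rintro r ⟨l, hl, rfl⟩ s ⟨l', hl', rfl⟩
    have hmem : ‖(z + w) + ∑ j, (l j + l' j) • v j‖ - ∑ j, (l j + l' j) * (f (v j) - a)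
        ∈ pset v f a (z + w) :=
      ⟨fun j => l j + l' j, fun j => add_nonneg (hl j) (hl' j), rfl⟩
    refine (pfun_le hf ha hmem).trans ?_
    have h1 : ‖(z + w) + ∑ j, (l j + l' j) • v j‖ ≤
        ‖z + ∑ j, l j • v j‖ + ‖w + ∑ j, l' j • v j‖ := by
      have : (z + w) + ∑ j, (l j + l' j) • v j =
          (z + ∑ j, l j • v j) + (w + ∑ j, l' j • v j) := by
        simp only [add_smul]; rw [Finset.sum_add_distrib]; abel
      rw [this]; exact norm_add_le _ _
    have h2 : ∑ j, (l j + l' j) * (f (v j) - a) =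
        ∑ j, l j * (f (v j) - a) + ∑ j, l' j * (f (v j) - a) := by
      rw [← Finset.sum_add_distrib]
      exact Finset.sum_congr rfl fun j _ => by ring
    linarith
  have h1 : ∀ r ∈ pset v f a z, pfun v f a (z + w) - pfun v f a z ≤ r → True := fun _ _ _ => trivial
  -- standard: a ≤ inf S₁ + inf S₂
  have : ∀ r ∈ pset v f a z, pfun v f a (z + w) - r ≤ pfun v f a w := by
    intro r hr
    refine le_csInf (pset_nonempty v f a w) fun s hs => ?_
    have := key r hr s hs; linarith
  have h2 : pfun v f a (z + w) - pfun v f a w ≤ pfun v f a z := by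
    refine le_csInf (pset_nonempty v f a z) fun r hr => ?_
    have := this r hr; linarith
  linarith

lemma pfun_smul {m : ℕ} {v : Fin m → X} {f : StrongDual ℝ X} {a : ℝ}
    (hf : ‖f‖ ≤ 1) (ha : 0 ≤ a) {c : ℝ} (hc : 0 < c) (z : X) :
    pfun v f a (c • z) = c * pfun v f a z := by
  have aux : ∀ d : ℝ, 0 < d → ∀ w : X, pfun v f a (d • w) ≤ d * pfun v f a w := by
    intro d hd w
    have : ∀ r ∈ pset v f a w, pfun v f a (d • w) ≤ d * r := by
      rintro r ⟨l, hl, rfl⟩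
      have hmem : ‖d • w + ∑ j, (d * l j) • v j‖ - ∑ j, (d * l j) * (f (v j) - a)
          ∈ pset v f a (d • w) :=
        ⟨fun j => d * l j, fun j => mul_nonneg hd.le (hl j), rfl⟩
      refine (pfun_le hf ha hmem).trans (le_of_eq ?_)
      have h1 : ‖d • w + ∑ j, (d * l j) • v j‖ = d * ‖w + ∑ j, l j • v j‖ := by
        have : d • w + ∑ j, (d * l j) • v j = d • (w + ∑ j, l j • v j) := by
          rw [smul_add, Finset.smul_sum]; simp only [smul_smul]
        rw [this, norm_smul, Real.norm_eq_abs, abs_of_pos hd]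
      have h2 : ∑ j, (d * l j) * (f (v j) - a) = d * ∑ j, l j * (f (v j) - a) := by
        rw [Finset.mul_sum]
        exact Finset.sum_congr rfl fun j _ => by ring
      rw [h1, h2]; ring
    have this2 : ∀ r ∈ pset v f a w, pfun v f a (d • w) / d ≤ r := by
      intro r hr
      rw [div_le_iff₀ hd]
      have h3 := this r hr
      linarith
    have h := le_csInf (pset_nonempty v f a w) this2
    rw [div_le_iff₀ hd, mul_comm] at h
    exact h
  refine le_antisymm (aux c hc z) ?_
  have h := aux c⁻¹ (inv_pos.mpr hc) (c • z)
  rw [inv_smul_smul₀ hc.ne' z] at h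
  calc c * pfun v f a z ≤ c * (c⁻¹ * pfun v f a (c • z)) := by
        exact mul_le_mul_of_nonneg_left h hc.le
  _ = pfun v f a (c • z) := by field_simp


lemma exists_dual {m : ℕ} (v : Fin m → X) (f : StrongDual ℝ X) (hf : ‖f‖ ≤ 1)
    {a : ℝ} (ha : 0 < a) {y : X} (hy : y ≠ 0) :
    ∃ g : StrongDual ℝ X, ‖g‖ ≤ 1 ∧ (∀ j, f (v j) - a ≤ g (v j)) ∧
      g y = pfun v f a y := by
  set N : X → ℝ := pfun v f a with hN
  have hNadd : ∀ z w, N (z + w) ≤ N z + N w := pfun_add hf ha.le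
  have hNhom : ∀ c : ℝ, 0 < c → ∀ z, N (c • z) = c * N z := fun c hc z => pfun_smul hf ha.le hc z
  have hN0 : N 0 = 0 := by
    have h1 : N 0 ≤ 0 := by simpa using pfun_le_norm (v := v) (f := f) (a := a) 0 hf ha.le
    have h2 : (0:ℝ) ≤ N 0 := by simpa using le_pfun (v := v) (f := f) (a := a) 0 hf ha.le
    linarith
  have hsym : 0 ≤ N y + N (-y) := by
    have h := hNadd y (-y); rw [add_neg_cancel, hN0] at h; linarith
  have Hc : ∀ c : ℝ, c • y = (0:X) → c • (N y) = 0 := by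
    intro c hc
    rcases smul_eq_zero.mp hc with h | h
    · simp [h]
    · exact absurd h hy
  set F := LinearPMap.mkSpanSingleton' (σ := RingHom.id ℝ) y (N y) Hc with hF
  have hdom : ∀ xx : F.domain, F xx ≤ N xx := by
    rintro ⟨z, hz⟩
    obtain ⟨c, rfl⟩ := Submodule.mem_span_singleton.mp hz
    have heq := LinearPMap.mkSpanSingleton'_apply (σ := RingHom.id ℝ) y (N y) Hc c hz
    rw [heq, RingHom.id_apply]
    rcases lt_trichotomy c 0 with hc | hc | hc
    · have hcy : N (c • y) = (-c) * N (-y) := by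
        rw [show c • y = (-c) • (-y) by simp, hNhom (-c) (by linarith) (-y)]
      rw [hcy, smul_eq_mul]; nlinarith
    · subst hc; simp [hN0]
    · rw [hNhom c hc y, smul_eq_mul]
  obtain ⟨g, hg1, hg2⟩ := exists_extension_of_le_sublinear F N hNhom hNadd hdom
  have hgb : ∀ z, |g z| ≤ ‖z‖ := by
    intro z
    rw [abs_le]
    refine ⟨?_, (hg2 z).trans (pfun_le_norm z hf ha.le)⟩
    have h1 := hg2 (-z); rw [map_neg] at h1
    have h2 := pfun_le_norm (v := v) (f := f) (a := a) (-z) hf ha.le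
    rw [norm_neg] at h2
    have := h1.trans h2
    linarith
  set G : StrongDual ℝ X := LinearMap.mkContinuous g 1 (fun z => by
    rw [one_mul, Real.norm_eq_abs]; exact hgb z) with hG
  have hGapp : ∀ z, G z = g z := fun z => rfl
  refine ⟨G, ?_, ?_, ?_⟩
  · exact LinearMap.mkContinuous_norm_le g zero_le_one _
  · intro j
    have hterm : (a - f (v j)) ∈ pset v f a (-(v j)) := by
      refine ⟨fun k => if k = j then 1 else 0, fun k => by positivity, ?_⟩
      have hs1 : ∑ k, (if k = j then (1:ℝ) else 0) • v k = v j := by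
        simp [ite_smul]
      have hs2 : ∑ k, (if k = j then (1:ℝ) else 0) * (f (v k) - a) = f (v j) - a := by
        simp [ite_mul]
      rw [hs1, hs2]; simp
    have h1 : g (-(v j)) ≤ a - f (v j) := (hg2 _).trans (pfun_le hf ha.le hterm)
    rw [map_neg] at h1
    rw [hGapp]; linarith
  · have hy1 : y ∈ F.domain := by
      show y ∈ (LinearPMap.mkSpanSingleton' (σ := RingHom.id ℝ) y (N y) Hc).domain
      rw [LinearPMap.domain_mkSpanSingleton]
      exact Submodule.mem_span_singleton_self y
    have h2 : F ⟨y, hy1⟩ = N y := LinearPMap.mkSpanSingleton'_apply_self (σ := RingHom.id ℝ) y (N y) Hc _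
    exact (hg1 ⟨y, hy1⟩).trans h2



variable {X : Type*} [NormedAddCommGroup X] [NormedSpace ℝ X]

def Aset {N : ℕ} (G : Fin N → X) (f : StrongDual ℝ X) (t₀ : ℝ) (y : X) : Set ℝ :=
  {r : ℝ | ∃ i : Fin N, ∃ t : ℝ, t₀ ≤ t ∧ r = (‖G i + t • y‖ - f (G i)) / t}

def Bset {N : ℕ} (G : Fin N → X) (f : StrongDual ℝ X) (t₀ : ℝ) (y : X) : Set ℝ :=
  {r : ℝ | ∃ i : Fin N, ∃ t : ℝ, t₀ ≤ t ∧ r = (‖G i - t • y‖ - f (G i)) / (-t)}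

lemma fy_le_of_mem_aset {N : ℕ} {G : Fin N → X} {f : StrongDual ℝ X} {t₀ : ℝ}
    (ht₀ : 0 < t₀) (hf : ‖f‖ ≤ 1) {y : X} {r : ℝ} (hr : r ∈ Aset G f t₀ y) : f y ≤ r := by
  obtain ⟨i, t, ht, rfl⟩ := hr
  have htpos : 0 < t := lt_of_lt_of_le ht₀ ht
  rw [le_div_iff₀ htpos]
  have h1 : f (G i) + t * f y = f (G i + t • y) := by rw [map_add, map_smul]; rfl
  have h2 : f (G i + t • y) ≤ ‖G i + t • y‖ := by
    have hb := f.le_opNorm (G i + t • y)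
    rw [Real.norm_eq_abs] at hb
    have := le_abs_self (f (G i + t • y))
    nlinarith [norm_nonneg (G i + t • y)]
  linarith

lemma aset_bddBelow {N : ℕ} {G : Fin N → X} {f : StrongDual ℝ X} {t₀ : ℝ}
    (ht₀ : 0 < t₀) (hf : ‖f‖ ≤ 1) (y : X) : BddBelow (Aset G f t₀ y) :=
  ⟨f y, fun _ hr => fy_le_of_mem_aset ht₀ hf hr⟩

lemma aset_nonempty {N : ℕ} (hN : 0 < N) (G : Fin N → X) (f : StrongDual ℝ X)
    {t₀ : ℝ} (ht₀ : 0 < t₀) (y : X) : (Aset G f t₀ y).Nonempty :=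
  ⟨_, ⟨⟨0, hN⟩, t₀, le_rfl, rfl⟩⟩

lemma sInf_aset_le_one {N : ℕ} (hN : 0 < N) {G : Fin N → X} {f : StrongDual ℝ X}
    {t₀ : ℝ} (ht₀ : 0 < t₀) (hf : ‖f‖ ≤ 1) (hG : ∀ i, ‖G i‖ ≤ 1) {y : X} (hy : ‖y‖ = 1) :
    sInf (Aset G f t₀ y) ≤ 1 := by
  refine le_of_forall_sub_le fun ε hε => ?_
  rw [sub_le_iff_le_add]
  set i0 : Fin N := ⟨0, hN⟩
  set t : ℝ := max t₀ (2 / ε) with hts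
  have htt₀ : t₀ ≤ t := le_max_left _ _
  have htpos : 0 < t := lt_of_lt_of_le ht₀ htt₀
  have h2ε : 2 / ε ≤ t := le_max_right _ _
  have hmem : (‖G i0 + t • y‖ - f (G i0)) / t ∈ Aset G f t₀ y := ⟨i0, t, htt₀, rfl⟩
  refine (csInf_le (aset_bddBelow ht₀ hf y) hmem).trans ?_
  rw [div_le_iff₀ htpos]
  have hn : ‖G i0 + t • y‖ ≤ 1 + t := by
    calc ‖G i0 + t • y‖ ≤ ‖G i0‖ + ‖t • y‖ := norm_add_le _ _
    _ ≤ 1 + t := by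
        rw [norm_smul, Real.norm_eq_abs, abs_of_pos htpos, hy, mul_one]
        linarith [hG i0]
  have hfGi : -1 ≤ f (G i0) := by
    have hb := f.le_opNorm (G i0)
    rw [Real.norm_eq_abs] at hb
    have := neg_abs_le (f (G i0))
    nlinarith [norm_nonneg (G i0), hG i0]
  have ht2 : 2 ≤ ε * t := by
    rw [← div_le_iff₀' hε]; exact h2ε
  nlinarith

lemma aset_neg_eq {N : ℕ} (G : Fin N → X) (f : StrongDual ℝ X) (t₀ : ℝ) (y : X) :
    Aset G f t₀ (-y) = (-1 : ℝ) • Bset G f t₀ y := by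
  ext r
  constructor
  · rintro ⟨i, t, ht, rfl⟩
    refine ⟨(‖G i - t • y‖ - f (G i)) / (-t), ⟨i, t, ht, rfl⟩, ?_⟩
    beta_reduce
    rw [smul_eq_mul, neg_one_mul, div_neg, neg_neg, smul_neg, ← sub_eq_add_neg]
  · rintro ⟨s, ⟨i, t, ht, rfl⟩, rfl⟩
    refine ⟨i, t, ht, ?_⟩
    beta_reduce
    rw [smul_eq_mul, neg_one_mul, div_neg, neg_neg, smul_neg, ← sub_eq_add_neg]

lemma sInf_aset_neg {N : ℕ} (G : Fin N → X) (f : StrongDual ℝ X) (t₀ : ℝ) (y : X) :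
    sInf (Aset G f t₀ (-y)) = -sSup (Bset G f t₀ y) := by
  rw [aset_neg_eq, Real.sInf_smul_of_nonpos (by norm_num), smul_eq_mul, neg_one_mul]

lemma exists_net {m : ℕ} (v : Fin m → X) {γ : ℝ} (hγ : 0 < γ) (e : X) (he : ‖e‖ = 1) :
    ∃ (NN : ℕ) (G : Fin NN → X), 0 < NN ∧ (∀ i, ‖G i‖ = 1) ∧
      ∀ μ : Fin m → ℝ, (∀ j, 0 ≤ μ j) → ∑ j, μ j = 1 → γ ≤ ‖∑ j, μ j • v j‖ →
        ∃ i, ‖(‖∑ j, μ j • v j‖)⁻¹ • (∑ j, μ j • v j) - G i‖ < γ := by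
  classical
  set φ : (Fin m → ℝ) → X := fun μ => (‖∑ j, μ j • v j‖)⁻¹ • ∑ j, μ j • v j with hφ
  set S : Set (Fin m → ℝ) := stdSimplex ℝ (Fin m) ∩ {μ | γ ≤ ‖∑ j, μ j • v j‖} with hS
  have hScompact : IsCompact S :=
    (isCompact_stdSimplex _ _).inter_right
      (isClosed_le continuous_const
        ((continuous_finset_sum _ fun j _ => (continuous_apply j).smul continuous_const).norm))
  have hφcont : ContinuousOn φ S := by
    have hsum : Continuous fun μ : Fin m → ℝ => ∑ j, μ j • v j :=
      continuous_finset_sum _ fun j _ => (continuous_apply j).smul continuous_const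
    refine ContinuousOn.smul ?_ hsum.continuousOn
    refine ContinuousOn.inv₀ hsum.norm.continuousOn ?_
    rintro μ ⟨-, hμ2⟩
    exact ne_of_gt (lt_of_lt_of_le hγ hμ2)
  have hKcompact : IsCompact (φ '' S) := hScompact.image_of_continuousOn hφcont
  have hKnorm : ∀ x ∈ φ '' S, ‖x‖ = 1 := by
    rintro x ⟨μ, ⟨-, hμ2⟩, rfl⟩
    have hpos : 0 < ‖∑ j, μ j • v j‖ := lt_of_lt_of_le hγ hμ2
    rw [hφ, norm_smul, Real.norm_eq_abs, abs_of_pos (inv_pos.mpr hpos), inv_mul_cancel₀ hpos.ne']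
  obtain ⟨t, hts, htfin, htcover⟩ :=
    totallyBounded_iff_subset.mp hKcompact.totallyBounded _ (dist_mem_uniformity hγ)
  set T : Finset X := insert e htfin.toFinset with hT
  refine ⟨T.card, fun i => ((T.equivFin.symm i : X)), ?_, ?_, ?_⟩
  · rw [Finset.card_pos]; exact ⟨e, Finset.mem_insert_self _ _⟩
  · intro i
    show ‖((T.equivFin.symm i : X))‖ = 1
    have hmem : ((T.equivFin.symm i : X)) ∈ T := (T.equivFin.symm i).2
    rcases Finset.mem_insert.mp hmem with h | h
    · rw [h]; exact he
    · exact hKnorm _ (hts (htfin.mem_toFinset.mp h))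
  · intro μ hμ1 hμ2 hμ3
    have hmemK : φ μ ∈ φ '' S := ⟨μ, ⟨⟨hμ1, hμ2⟩, hμ3⟩, rfl⟩
    obtain ⟨z, hz, hdz⟩ := mem_iUnion₂.mp (htcover hmemK)
    have hzT : z ∈ T := Finset.mem_insert_of_mem (htfin.mem_toFinset.mpr hz)
    refine ⟨T.equivFin ⟨z, hzT⟩, ?_⟩
    simp only [Equiv.symm_apply_apply]
    rw [← dist_eq_norm]
    exact hdz


lemma dual_le_norm (f : StrongDual ℝ X) (hf : ‖f‖ ≤ 1) (z : X) : f z ≤ ‖z‖ := by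
  have hb := f.le_opNorm z
  rw [Real.norm_eq_abs] at hb
  have h2 := mul_le_mul_of_nonneg_right hf (norm_nonneg z)
  rw [one_mul] at h2
  linarith [le_abs_self (f z)]

lemma dual_abs_le (f : StrongDual ℝ X) (hf : ‖f‖ ≤ 1) (z : X) : |f z| ≤ ‖z‖ := by
  rw [abs_le]
  constructor
  · have := dual_le_norm f hf (-z); rw [map_neg, norm_neg] at this; linarith
  · exact dual_le_norm f hf z

lemma mem_bset_le {N : ℕ} {G : Fin N → X} {f : StrongDual ℝ X} {t₀ : ℝ}
    (ht₀ : 0 < t₀) (hf : ‖f‖ ≤ 1) {y : X} {r : ℝ} (hr : r ∈ Bset G f t₀ y) : r ≤ f y := by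
  obtain ⟨i, t, ht, rfl⟩ := hr
  have htpos : 0 < t := lt_of_lt_of_le ht₀ ht
  rw [div_neg, neg_le, le_div_iff₀ htpos]
  have h1 : f (G i) - t * f y = f (G i - t • y) := by
    rw [map_sub, map_smul]; rfl
  have h2 : f (G i - t • y) ≤ ‖G i - t • y‖ := dual_le_norm f hf _
  nlinarith

lemma bset_nonempty {N : ℕ} (hN : 0 < N) (G : Fin N → X) (f : StrongDual ℝ X)
    {t₀ : ℝ} (y : X) : (Bset G f t₀ y).Nonempty :=
  ⟨_, ⟨⟨0, hN⟩, t₀, le_rfl, rfl⟩⟩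

lemma bset_bddAbove {N : ℕ} {G : Fin N → X} {f : StrongDual ℝ X} {t₀ : ℝ}
    (ht₀ : 0 < t₀) (hf : ‖f‖ ≤ 1) (y : X) : BddAbove (Bset G f t₀ y) :=
  ⟨f y, fun _ hr => mem_bset_le ht₀ hf hr⟩

lemma pfun_ge_main {m NN : ℕ} {v : Fin m → X} (hv : ∀ j, ‖v j‖ ≤ 1)
    {f : StrongDual ℝ X} (hf : ‖f‖ ≤ 1) {a : ℝ} (ha : 0 < a)
    {η : ℝ} (hη : 0 < η)
    {G : Fin NN → X} (hNN : 0 < NN) (hG : ∀ i, ‖G i‖ ≤ 1)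
    (hnet : ∀ μ : Fin m → ℝ, (∀ j, 0 ≤ μ j) → ∑ j, μ j = 1 →
       (η * a / 4) ≤ ‖∑ j, μ j • v j‖ →
       ∃ i, ‖(‖∑ j, μ j • v j‖)⁻¹ • (∑ j, μ j • v j) - G i‖ < η * a / 4)
    {y : X} (hy : ‖y‖ = 1) :
    sInf (Aset G f (a / 2) y) - η ≤ pfun v f a y := by
  have ht₀ : (0:ℝ) < a / 2 := by linarith
  have hA1 : sInf (Aset G f (a/2) y) ≤ 1 := sInf_aset_le_one hNN ht₀ hf hG hy
  refine le_csInf (pset_nonempty v f a y) ?_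
  rintro r ⟨l, hl, rfl⟩
  set s : ℝ := ∑ j, l j with hs
  set w : X := ∑ j, l j • v j with hw
  have hs0 : 0 ≤ s := Finset.sum_nonneg fun j _ => hl j
  have hwle : ‖w‖ ≤ s := by
    calc ‖w‖ ≤ ∑ j, ‖l j • v j‖ := norm_sum_le _ _
    _ ≤ ∑ j, l j := Finset.sum_le_sum fun j _ => by
        rw [norm_smul, Real.norm_eq_abs, abs_of_nonneg (hl j)]
        calc l j * ‖v j‖ ≤ l j * 1 := mul_le_mul_of_nonneg_left (hv j) (hl j)
        _ = l j := mul_one _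
  have hsum : ∑ j, l j * (f (v j) - a) = f w - a * s := by
    rw [hw, map_sum, hs, Finset.mul_sum, ← Finset.sum_sub_distrib]
    refine Finset.sum_congr rfl fun j _ => ?_
    rw [map_smul, smul_eq_mul]; ring
  rw [hsum]
  have has : 0 ≤ a * s := mul_nonneg ha.le hs0
  have hfy : |f y| ≤ 1 := by
    have := dual_abs_le f hf y; rwa [hy] at this
  have hfw : |f w| ≤ ‖w‖ := dual_abs_le f hf w
  by_cases hcase1 : 2 ≤ a * s
  · have h1 : f y + f w ≤ ‖y + w‖ := by
      have h := dual_le_norm f hf (y + w); rw [map_add] at h; linarith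
    have h3 := abs_le.mp hfy
    have h4 := abs_le.mp hfw
    linarith
  push_neg at hcase1
  have h1w : 1 - ‖w‖ ≤ ‖y + w‖ := by
    have h := norm_add_le (y + w) (-w)
    rw [add_neg_cancel_right, norm_neg, hy] at h
    linarith
  by_cases hcase2 : ‖w‖ < η / 2
  · have h4 := abs_le.mp hfw
    linarith
  push_neg at hcase2
  set c : ℝ := ‖w‖ with hc
  have hc0 : 0 < c := lt_of_lt_of_le (by linarith) hcase2
  have hspos : 0 < s := lt_of_lt_of_le hc0 hwle
  have hac : a * c < 2 := lt_of_le_of_lt (by nlinarith) hcase1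
  have hμ0 : ∀ j, 0 ≤ l j / s := fun j => div_nonneg (hl j) hs0
  have hμsum : ∑ j, l j / s = 1 := by
    rw [← Finset.sum_div, ← hs, div_self hspos.ne']
  have hzval : ∑ j, (l j / s) • v j = s⁻¹ • w := by
    rw [hw, Finset.smul_sum]
    refine Finset.sum_congr rfl fun j _ => ?_
    rw [smul_smul, div_eq_inv_mul]
  have hznorm : ‖∑ j, (l j / s) • v j‖ = s⁻¹ * c := by
    rw [hzval, norm_smul, Real.norm_eq_abs, abs_of_pos (inv_pos.mpr hspos), hc]
  have hthresh : η * a / 4 ≤ ‖∑ j, (l j / s) • v j‖ := by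
    rw [hznorm, show s⁻¹ * c = c / s from by rw [div_eq_inv_mul], le_div_iff₀ hspos]
    nlinarith
  obtain ⟨i, hi⟩ := hnet (fun j => l j / s) hμ0 hμsum hthresh
  have huu : (‖∑ j, (l j / s) • v j‖)⁻¹ • (∑ j, (l j / s) • v j) = c⁻¹ • w := by
    rw [hznorm, hzval, smul_smul, mul_inv, inv_inv]
    rw [show s * c⁻¹ * s⁻¹ = c⁻¹ * (s * s⁻¹) from by ring, mul_inv_cancel₀ hspos.ne', mul_one]
  rw [huu] at hi
  have hta : a / 2 ≤ c⁻¹ := by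
    rw [show c⁻¹ = 1 / c from (one_div c).symm, div_le_div_iff₀ (by norm_num) hc0]
    nlinarith
  have h7 : sInf (Aset G f (a/2) y) ≤ (‖G i + c⁻¹ • y‖ - f (G i)) * c := by
    have hmem : (‖G i + c⁻¹ • y‖ - f (G i)) / c⁻¹ ∈ Aset G f (a/2) y := ⟨i, c⁻¹, hta, rfl⟩
    have h := csInf_le (aset_bddBelow ht₀ hf y) hmem
    have h2 : (‖G i + c⁻¹ • y‖ - f (G i)) / c⁻¹ = (‖G i + c⁻¹ • y‖ - f (G i)) * c := by
      rw [div_eq_mul_inv, inv_inv]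
    rwa [h2] at h
  have hnorm_eq : ‖y + w‖ = c * ‖c⁻¹ • w + c⁻¹ • y‖ := by
    have hyc : y + w = c • (c⁻¹ • w + c⁻¹ • y) := by
      rw [smul_add, smul_inv_smul₀ hc0.ne', smul_inv_smul₀ hc0.ne', add_comm]
    rw [hyc, norm_smul, Real.norm_eq_abs, abs_of_pos hc0]
  have hfw_eq : f w = c * f (c⁻¹ • w) := by
    rw [map_smul, smul_eq_mul, ← mul_assoc, mul_inv_cancel₀ hc0.ne', one_mul]
  have h5 : ‖G i + c⁻¹ • y‖ - η * a / 4 ≤ ‖c⁻¹ • w + c⁻¹ • y‖ := by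
    have h := norm_sub_norm_le (G i + c⁻¹ • y) (c⁻¹ • w + c⁻¹ • y)
    rw [add_sub_add_right_eq_sub] at h
    have h2 : ‖G i - c⁻¹ • w‖ = ‖c⁻¹ • w - G i‖ := norm_sub_rev _ _
    linarith
  have h6 : f (c⁻¹ • w) ≤ f (G i) + η * a / 4 := by
    have h := dual_le_norm f hf (c⁻¹ • w - G i)
    rw [map_sub] at h
    linarith
  have hγc : 2 * (η * a / 4) * c ≤ η := by
    have h := mul_le_mul_of_nonneg_left hac.le hη.le
    linarith
  have h5c := mul_le_mul_of_nonneg_left h5 hc0.le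
  have h6c := mul_le_mul_of_nonneg_left h6 hc0.le
  rw [hnorm_eq, hfw_eq]
  linarith



variable {X : Type*} [NormedAddCommGroup X] [NormedSpace ℝ X]

lemma exists_basic_nbhd (f : StrongDual ℝ X) (V : Set (WeakDual ℝ X)) (hV : IsOpen V)
    (hfV : StrongDual.toWeakDual f ∈ V) :
    ∃ (I : Finset X) (α : ℝ), 0 < α ∧
      ∀ g : StrongDual ℝ X, (∀ x ∈ I, |g x - f x| < α) →
        StrongDual.toWeakDual g ∈ V := by
  classical
  obtain ⟨W, hWopen, hWpre⟩ := isOpen_induced_iff.mp hV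
  have hfW : (fun x => f x) ∈ W := by
    have : StrongDual.toWeakDual f ∈
        (fun (g : WeakDual ℝ X) (x : X) => g x) ⁻¹' W := hWpre.symm ▸ hfV
    exact this
  obtain ⟨I, u, hu, hsub⟩ := isOpen_pi_iff.mp hWopen _ hfW
  choose! ρ hρpos hρball using fun x (hx : x ∈ I) =>
    Metric.isOpen_iff.mp (hu x hx).1 (f x) (hu x hx).2
  by_cases hI : I.Nonempty
  · refine ⟨I, I.inf' hI ρ, ?_, ?_⟩
    · rw [Finset.lt_inf'_iff]
      exact fun x hx => hρpos x hx
    · intro g hg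
      have hmem : (fun x => g x) ∈ (I : Set X).pi u := by
        intro x hx
        have hx' : x ∈ I := hx
        refine hρball x hx' ?_
        rw [mem_ball, Real.dist_eq]
        exact lt_of_lt_of_le (hg x hx') (Finset.inf'_le ρ hx')
      rw [← hWpre]
      exact hsub hmem
  · refine ⟨I, 1, one_pos, fun g _ => ?_⟩
    have hmem : (fun x => g x) ∈ (I : Set X).pi u := by
      intro x hx
      exact absurd ⟨x, hx⟩ hI
    rw [← hWpre]
    exact hsub hmem


end WARAux



open scoped BigOperators

set_option maxHeartbeats 2000000 in
open WARAux in
theorem weaklyAverageRough_iff_inf_sub_sup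
    (X : Type*) [NormedAddCommGroup X] [NormedSpace ℝ X] [CompleteSpace X] [Nontrivial X]
    (δ : ℝ) (hδ : 0 < δ) :
    WeaklyAverageRough X δ ↔
      ∀ n : ℕ, 0 < n → ∀ x : Fin n → X, (∀ i, ‖x i‖ = 1) →
        ∀ f : StrongDual ℝ X, ‖f‖ ≤ 1 →
          ∀ ε > (0 : ℝ), ∀ t₀ > (0 : ℝ), ∃ y : X, ‖y‖ = 1 ∧
            δ - ε <
              sInf {r : ℝ | ∃ i : Fin n, ∃ t : ℝ, t₀ ≤ t ∧
                      r = (‖x i + t • y‖ - f (x i)) / t} -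
                sSup {r : ℝ | ∃ i : Fin n, ∃ t : ℝ, t₀ ≤ t ∧
                      r = (‖x i - t • y‖ - f (x i)) / (-t)} := by
  constructor
  · -- WeaklyAverageRough → condition
    intro hWAR n hn x hx f hf ε hε t₀ ht₀
    by_cases hεδ : δ < ε
    · -- trivial case : difference is nonnegative
      obtain ⟨z0, hz0⟩ := exists_ne (0 : X)
      have hz0n : (0:ℝ) < ‖z0‖ := norm_pos_iff.mpr hz0
      refine ⟨‖z0‖⁻¹ • z0, ?_, ?_⟩
      · rw [norm_smul, Real.norm_eq_abs, abs_of_pos (inv_pos.mpr hz0n), inv_mul_cancel₀ hz0n.ne']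
      · set y : X := ‖z0‖⁻¹ • z0
        show δ - ε < sInf (Aset x f t₀ y) - sSup (Bset x f t₀ y)
        have h1 : f y ≤ sInf (Aset x f t₀ y) :=
          le_csInf (aset_nonempty hn x f ht₀ y) fun r hr => fy_le_of_mem_aset ht₀ hf hr
        have h2 : sSup (Bset x f t₀ y) ≤ f y :=
          csSup_le (bset_nonempty hn x f y) fun r hr => mem_bset_le ht₀ hf hr
        linarith
    push_neg at hεδ
    set γ : ℝ := ε * t₀ / 8 with hγdef
    have hγ : 0 < γ := by positivity
    set V : Set (WeakDual ℝ X) :=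
      ⋂ i : Fin n, {g : WeakDual ℝ X | f (x i) - γ < g (x i)} with hVdef
    have hVopen : IsOpen V := by
      refine isOpen_iInter_of_finite fun i => ?_
      have : Continuous fun g : WeakDual ℝ X => g (x i) := WeakDual.eval_continuous (x i)
      exact isOpen_lt continuous_const this
    set U : Set (StrongDual ℝ X) :=
      {f' : StrongDual ℝ X | ‖f'‖ ≤ 1} ∩
        {f' : StrongDual ℝ X | StrongDual.toWeakDual f' ∈ V} with hUdef
    have hfU : f ∈ U := by
      refine ⟨hf, ?_⟩
      show StrongDual.toWeakDual f ∈ V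
      rw [hVdef]
      exact Set.mem_iInter.mpr fun i => by
        show f (x i) - γ < f (x i); linarith
    have hdiam : δ ≤ Metric.diam U := hWAR V hVopen U rfl ⟨f, hfU⟩
    have hgh : ∃ g ∈ U, ∃ h ∈ U, δ - ε / 4 < dist g h := by
      by_contra hcon
      push_neg at hcon
      have : Metric.diam U ≤ δ - ε / 4 :=
        Metric.diam_le_of_forall_dist_le (by linarith) fun p hp q hq => hcon p hp q hq
      linarith
    obtain ⟨g, hg, h, hh, hdist⟩ := hgh
    rw [dist_eq_norm] at hdist
    have hc0 : (0:ℝ) ≤ δ - ε / 4 := by linarith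
    -- find a norming unit vector for g - h
    obtain ⟨z, hz1, hz2⟩ := ContinuousLinearMap.exists_lt_apply_of_lt_opNorm (g - h) hdist
    have hzne : z ≠ 0 := by
      intro h0
      rw [h0] at hz2
      simp at hz2
      linarith
    have hzn : (0:ℝ) < ‖z‖ := norm_pos_iff.mpr hzne
    have hzinv : (1:ℝ) ≤ ‖z‖⁻¹ := by
      rw [le_inv_comm₀ one_pos hzn]
      simpa using hz1.le
    have hP := hz2
    rw [Real.norm_eq_abs] at hP
    have hkey : ∃ y : X, ‖y‖ = 1 ∧ δ - ε / 4 < (g - h) y := by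
      by_cases hsgn : 0 ≤ (g - h) z
      · refine ⟨‖z‖⁻¹ • z, ?_, ?_⟩
        · rw [norm_smul, Real.norm_eq_abs, abs_of_pos (inv_pos.mpr hzn), inv_mul_cancel₀ hzn.ne']
        · rw [map_smul, smul_eq_mul]
          rw [abs_of_nonneg hsgn] at hP
          nlinarith
      · push_neg at hsgn
        refine ⟨-(‖z‖⁻¹ • z), ?_, ?_⟩
        · rw [norm_neg, norm_smul, Real.norm_eq_abs, abs_of_pos (inv_pos.mpr hzn),
            inv_mul_cancel₀ hzn.ne']
        · rw [map_neg, map_smul, smul_eq_mul]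
          rw [abs_of_neg hsgn] at hP
          nlinarith
    obtain ⟨y, hy1, hy2⟩ := hkey
    refine ⟨y, hy1, ?_⟩
    show δ - ε < sInf (Aset x f t₀ y) - sSup (Bset x f t₀ y)
    have hgU : ∀ i, f (x i) - γ < g (x i) := by
      intro i
      have := Set.mem_iInter.mp hg.2 i
      exact this
    have hhU : ∀ i, f (x i) - γ < h (x i) := by
      intro i
      have := Set.mem_iInter.mp hh.2 i
      exact this
    have hγt₀ : γ / t₀ = ε / 8 := by
      rw [hγdef, div_div, mul_comm (8:ℝ) t₀, ← div_div, mul_div_assoc, div_self ht₀.ne',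
        mul_one]
    have hA : g y - γ / t₀ ≤ sInf (Aset x f t₀ y) := by
      refine le_csInf (aset_nonempty hn x f ht₀ y) ?_
      rintro r ⟨i, t, ht, rfl⟩
      have htpos : 0 < t := lt_of_lt_of_le ht₀ ht
      rw [le_div_iff₀ htpos]
      have hgn : g (x i) + t * g y ≤ ‖x i + t • y‖ := by
        have h1 := dual_le_norm g hg.1 (x i + t • y)
        rw [map_add, map_smul, smul_eq_mul] at h1
        linarith
      have hγmul : γ ≤ γ / t₀ * t := by
        have h1 : γ / t₀ * t₀ ≤ γ / t₀ * t :=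
          mul_le_mul_of_nonneg_left ht (le_of_lt (div_pos hγ ht₀))
        rw [div_mul_cancel₀ _ ht₀.ne'] at h1
        exact h1
      have := hgU i
      nlinarith
    have hB : sSup (Bset x f t₀ y) ≤ h y + γ / t₀ := by
      refine csSup_le (bset_nonempty hn x f y) ?_
      rintro r ⟨i, t, ht, rfl⟩
      have htpos : 0 < t := lt_of_lt_of_le ht₀ ht
      rw [div_neg, neg_le, le_div_iff₀ htpos]
      have hhn : h (x i) - t * h y ≤ ‖x i - t • y‖ := by
        have h1 := dual_le_norm h hh.1 (x i - t • y)
        rw [map_sub, map_smul, smul_eq_mul] at h1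
        linarith
      have hγmul : γ ≤ γ / t₀ * t := by
        have h1 : γ / t₀ * t₀ ≤ γ / t₀ * t :=
          mul_le_mul_of_nonneg_left ht (le_of_lt (div_pos hγ ht₀))
        rw [div_mul_cancel₀ _ ht₀.ne'] at h1
        exact h1
      have := hhU i
      nlinarith
    have hsub : (g - h) y = g y - h y := rfl
    rw [hsub] at hy2
    rw [hγt₀] at hA hB
    linarith
  · -- condition → WeaklyAverageRough
    intro hcond V hVopen U hU hUne
    obtain ⟨f, hfU⟩ := hUne
    rw [hU] at hfU
    have hf1 : ‖f‖ ≤ 1 := hfU.1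
    have hfV : StrongDual.toWeakDual f ∈ V := hfU.2
    obtain ⟨I, α, hα, hI⟩ := exists_basic_nbhd f V hVopen hfV
    classical
    obtain ⟨z0, hz0⟩ := exists_ne (0 : X)
    have hz0n : (0:ℝ) < ‖z0‖ := norm_pos_iff.mpr hz0
    obtain ⟨e, hedef⟩ : ∃ e : X, e = ‖z0‖⁻¹ • z0 := ⟨_, rfl⟩
    have he : ‖e‖ = 1 := by
      rw [hedef, norm_smul, Real.norm_eq_abs, abs_of_pos (inv_pos.mpr hz0n),
        inv_mul_cancel₀ hz0n.ne']
    obtain ⟨M, hMdef⟩ : ∃ M : ℝ, M = 1 + ∑ x ∈ I, ‖x‖ := ⟨_, rfl⟩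
    have hM1 : 1 ≤ M := by
      rw [hMdef]
      have : (0:ℝ) ≤ ∑ x ∈ I, ‖x‖ := Finset.sum_nonneg fun x _ => norm_nonneg x
      linarith
    have hMx : ∀ x ∈ I, ‖x‖ ≤ M := by
      intro x hxI
      rw [hMdef]
      have := Finset.single_le_sum (f := fun x : X => ‖x‖) (fun y _ => norm_nonneg y) hxI
      linarith
    obtain ⟨a, hadef⟩ : ∃ a : ℝ, a = α / (2 * M) := ⟨_, rfl⟩
    have ha : 0 < a := by
      rw [hadef]
      exact div_pos hα (by linarith)
    -- the constraint family
    obtain ⟨J, hJdef⟩ : ∃ J : Finset X,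
        J = insert e (((I.filter (· ≠ 0)).image (fun x => ‖x‖⁻¹ • x)) ∪
          ((I.filter (· ≠ 0)).image (fun x => -(‖x‖⁻¹ • x)))) := ⟨_, rfl⟩
    obtain ⟨m, v, hvmem, hvJ⟩ : ∃ (m : ℕ) (v : Fin m → X),
        (∀ j, v j ∈ J) ∧ (∀ w ∈ J, ∃ j, v j = w) :=
      ⟨J.card, fun j => ((J.equivFin.symm j : X)), fun j => (J.equivFin.symm j).2,
        fun w hw => ⟨J.equivFin ⟨w, hw⟩, by simp⟩⟩
    have hnorm1 : ∀ w ∈ J, ‖w‖ = 1 := by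
      intro w hw
      rw [hJdef] at hw
      rcases Finset.mem_insert.mp hw with hw | hw
      · rw [hw]; exact he
      rcases Finset.mem_union.mp hw with hw | hw
      · obtain ⟨x, hxI, rfl⟩ := Finset.mem_image.mp hw
        have hxne : x ≠ 0 := (Finset.mem_filter.mp hxI).2
        have hxn : (0:ℝ) < ‖x‖ := norm_pos_iff.mpr hxne
        rw [norm_smul, Real.norm_eq_abs, abs_of_pos (inv_pos.mpr hxn), inv_mul_cancel₀ hxn.ne']
      · obtain ⟨x, hxI, rfl⟩ := Finset.mem_image.mp hw
        have hxne : x ≠ 0 := (Finset.mem_filter.mp hxI).2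
        have hxn : (0:ℝ) < ‖x‖ := norm_pos_iff.mpr hxne
        rw [norm_neg, norm_smul, Real.norm_eq_abs, abs_of_pos (inv_pos.mpr hxn),
          inv_mul_cancel₀ hxn.ne']
    have hv1 : ∀ j, ‖v j‖ ≤ 1 := fun j => (hnorm1 _ (hvmem j)).le
    -- show δ ≤ diam U via δ - ε for all ε
    refine le_of_forall_sub_le fun ε hε => ?_
    obtain ⟨η, hηdef⟩ : ∃ η : ℝ, η = ε / 8 := ⟨_, rfl⟩
    have hη : 0 < η := by rw [hηdef]; positivity
    have hγpos : 0 < η * a / 4 := by positivity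
    obtain ⟨NN, G, hNN, hG1, hnet⟩ := exists_net v hγpos e he
    obtain ⟨y, hy1, hgap0⟩ := hcond NN hNN G hG1 f hf1 (ε/2) (by positivity) (a/2) (by positivity)
    have hgap : δ - ε/2 < sInf (Aset G f (a/2) y) - sSup (Bset G f (a/2) y) := hgap0
    have hyne : y ≠ 0 := fun h0 => by rw [h0, norm_zero] at hy1; norm_num at hy1
    have hynne : (-y) ≠ 0 := neg_ne_zero.mpr hyne
    obtain ⟨g, hgnorm, hgcons, hgy⟩ := exists_dual v f hf1 ha hyne
    obtain ⟨h, hhnorm, hhcons, hhy⟩ := exists_dual v f hf1 ha hynne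
    have hyn1 : ‖-y‖ = 1 := by rw [norm_neg]; exact hy1
    have hG1' : ∀ i, ‖G i‖ ≤ 1 := fun i => (hG1 i).le
    have E1 : sInf (Aset G f (a/2) y) - η ≤ pfun v f a y :=
      pfun_ge_main hv1 hf1 ha hη hNN hG1' hnet hy1
    have E2 : sInf (Aset G f (a/2) (-y)) - η ≤ pfun v f a (-y) :=
      pfun_ge_main hv1 hf1 ha hη hNN hG1' hnet hyn1
    rw [sInf_aset_neg] at E2
    -- membership of g and h in U
    have hmemU : ∀ g' : StrongDual ℝ X, ‖g'‖ ≤ 1 →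
        (∀ j, f (v j) - a ≤ g' (v j)) → g' ∈ U := by
      intro g' hg'n hg'c
      rw [hU]
      refine ⟨hg'n, hI g' ?_⟩
      intro x hxI
      by_cases hxz : x = 0
      · rw [hxz]
        simp only [map_zero, sub_zero, sub_self, abs_zero]
        exact hα
      · have hxn : (0:ℝ) < ‖x‖ := norm_pos_iff.mpr hxz
        have hxf : x ∈ I.filter (· ≠ 0) := Finset.mem_filter.mpr ⟨hxI, hxz⟩
        have hmem1 : (‖x‖⁻¹ • x) ∈ J := by
          rw [hJdef]
          exact Finset.mem_insert_of_mem (Finset.mem_union_left _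
            (Finset.mem_image_of_mem _ hxf))
        have hmem2 : (-(‖x‖⁻¹ • x)) ∈ J := by
          rw [hJdef]
          exact Finset.mem_insert_of_mem (Finset.mem_union_right _
            (Finset.mem_image_of_mem _ hxf))
        obtain ⟨j1, hj1⟩ := hvJ _ hmem1
        obtain ⟨j2, hj2⟩ := hvJ _ hmem2
        have hc1 := hg'c j1
        have hc2 := hg'c j2
        rw [hj1] at hc1
        rw [hj2] at hc2
        rw [map_neg, map_neg] at hc2
        -- |g' xhat - f xhat| ≤ a
        have habs : |g' (‖x‖⁻¹ • x) - f (‖x‖⁻¹ • x)| ≤ a := by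
          rw [abs_le]; constructor <;> linarith
        have hxrep : x = ‖x‖ • (‖x‖⁻¹ • x) := (smul_inv_smul₀ hxn.ne' x).symm
        have hgx : g' x = ‖x‖ * g' (‖x‖⁻¹ • x) := by
          conv_lhs => rw [hxrep]
          rw [map_smul, smul_eq_mul]
        have hfx : f x = ‖x‖ * f (‖x‖⁻¹ • x) := by
          conv_lhs => rw [hxrep]
          rw [map_smul, smul_eq_mul]
        rw [hgx, hfx, ← mul_sub, abs_mul, abs_of_pos hxn]
        have h1 : ‖x‖ * |g' (‖x‖⁻¹ • x) - f (‖x‖⁻¹ • x)| ≤ ‖x‖ * a :=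
          mul_le_mul_of_nonneg_left habs hxn.le
        have h2 : ‖x‖ * a ≤ M * a := mul_le_mul_of_nonneg_right (hMx x hxI) ha.le
        have h3 : M * a = α / 2 := by
          rw [hadef]
          field_simp
        linarith
    have hgmem : g ∈ U := hmemU g hgnorm hgcons
    have hhmem : h ∈ U := hmemU h hhnorm hhcons
    -- lower bound on the distance
    have hghy : g y - h y = pfun v f a y + pfun v f a (-y) := by
      have : h y = -(h (-y)) := by rw [map_neg, neg_neg]
      rw [this, hgy, hhy]; ring
    have hdistgh : δ - ε ≤ dist g h := by
      rw [dist_eq_norm]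
      have hle : g y - h y ≤ ‖g - h‖ := by
        have h1 := (g - h).le_opNorm y
        rw [hy1, mul_one, Real.norm_eq_abs] at h1
        have h2 : (g - h) y = g y - h y := rfl
        linarith [le_abs_self ((g - h) y), h2 ▸ le_abs_self ((g-h) y)]
      have : δ - ε ≤ g y - h y := by
        rw [hghy]
        linarith
      linarith
    have hUbdd : Bornology.IsBounded U := by
      refine (Metric.isBounded_closedBall (x := (0 : StrongDual ℝ X)) (r := 1)).subset ?_
      intro p hp
      rw [hU] at hp
      rw [Metric.mem_closedBall, dist_zero_right]
      exact hp.1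
    exact hdistgh.trans (Metric.dist_le_diam_of_mem hUbdd hgmem hhmem)
end

section
/- Let X be a nontrivial real Banach space and δ > 0. Then X is weakly δ-average rough if and only if the following holds: whenever E is a finite-dimensional subspace of X, x* is in the closed unit ball B_{X*} of the dual, and ε > 0, there exist functionals x*₁, x*₂ ∈ X* with ‖x*₁‖ ≤ 1+ε and ‖x*₂‖ ≤ 1+ε, and y in the unit sphere S_X, such that x*₁ and x*₂ both agree with x* on E and x*₁(y) − x*₂(y) > δ − ε. -/
open scoped BigOperators

set_option maxHeartbeats 1000000

section Aux
open Metric NormedSpace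

lemma forward_dir (X : Type*) [NormedAddCommGroup X] [NormedSpace ℝ X] [Nontrivial X]
    (δ : ℝ) (hδ : 0 < δ) (h : ∀ V : Set (WeakDual ℝ X), IsOpen V →
    ∀ U : Set (StrongDual ℝ X),
      U = {f : StrongDual ℝ X | ‖f‖ ≤ 1} ∩
            {f : StrongDual ℝ X | StrongDual.toWeakDual f ∈ V} →
      U.Nonempty → δ ≤ Metric.diam U) :
    ∀ E : Submodule ℝ X, FiniteDimensional ℝ E →
        ∀ f : StrongDual ℝ X, ‖f‖ ≤ 1 →
          ∀ ε > (0 : ℝ), ∃ f₁ f₂ : StrongDual ℝ X,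
            ‖f₁‖ ≤ 1 + ε ∧ ‖f₂‖ ≤ 1 + ε ∧ ∃ y : X, ‖y‖ = 1 ∧
              (∀ x ∈ E, f₁ x = f x ∧ f₂ x = f x) ∧ δ - ε < f₁ y - f₂ y := by
  intro E hE f hf ε hε
  haveI := hE
  set β : ℝ := min ε δ / 16 with hβdef
  have hβpos : 0 < β := by
    have := lt_min hε hδ
    positivity
  have hβε : 16 * β ≤ ε := by
    have := min_le_left ε δ; simp only [hβdef]; linarith
  have hβδ : 16 * β ≤ δ := by
    have := min_le_right ε δ; simp only [hβdef]; linarith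
  -- finite β-net of the sphere of E, viewed in X
  set S : Set X := Subtype.val '' (Metric.sphere (0 : E) 1) with hSdef
  have hScomp : IsCompact S := (isCompact_sphere (0 : E) 1).image continuous_subtype_val
  have hScov : S ⊆ ⋃ c ∈ S, Metric.ball c β := fun x hx =>
    Set.mem_biUnion hx (Metric.mem_ball_self hβpos)
  obtain ⟨T, hTS, hTfin, hTcov⟩ :=
    hScomp.elim_finite_subcover_image (fun c _ => Metric.isOpen_ball) hScov
  -- the weak* open set
  set V : Set (WeakDual ℝ X) :=
    ⋂ c ∈ T, (fun g : WeakDual ℝ X => g c) ⁻¹' Metric.ball (f c) β with hVdef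
  have hVopen : IsOpen V :=
    hTfin.isOpen_biInter fun c _ =>
      (Metric.isOpen_ball).preimage (WeakDual.eval_continuous c)
  set U : Set (StrongDual ℝ X) :=
    {g : StrongDual ℝ X | ‖g‖ ≤ 1} ∩
      {g : StrongDual ℝ X | StrongDual.toWeakDual g ∈ V} with hUdef
  have hmemV : ∀ g : StrongDual ℝ X, g ∈ U → ∀ c ∈ T, |g c - f c| < β := by
    intro g hg c hc
    have h2 : StrongDual.toWeakDual g ∈
        ⋂ c ∈ T, (fun g : WeakDual ℝ X => g c) ⁻¹' Metric.ball (f c) β := hg.2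
    have := Set.mem_iInter₂.mp h2 c hc
    simpa [Real.dist_eq] using this
  have hfU : f ∈ U := by
    constructor
    · exact hf
    · rw [Set.mem_setOf_eq, hVdef, Set.mem_iInter₂]
      intro c hc
      simp [Metric.mem_ball, hβpos]
  have hdiam : δ ≤ Metric.diam U := h V hVopen U rfl ⟨f, hfU⟩
  -- pick two far-apart points of U
  obtain ⟨g₁, hg₁, g₂, hg₂, hgd⟩ : ∃ g₁ ∈ U, ∃ g₂ ∈ U, δ - β < dist g₁ g₂ := by
    by_contra hcon
    push_neg at hcon
    have : Metric.diam U ≤ δ - β :=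
      Metric.diam_le_of_forall_dist_le (by linarith) fun x hx y hy => hcon x hx y hy
    linarith
  -- correction functionals
  have key : ∀ g : StrongDual ℝ X, g ∈ U →
      ∃ k : StrongDual ℝ X, ‖k‖ ≤ 3 * β ∧ ∀ x ∈ E, (g + k) x = f x := by
    intro g hg
    set φ : E →L[ℝ] ℝ := (f - g).comp E.subtypeL with hφdef
    have hgle : ‖g‖ ≤ 1 := hg.1
    have hfg : ‖f - g‖ ≤ 2 := by
      have := norm_sub_le f g
      linarith
    have hφn : ‖φ‖ ≤ 3 * β := by
      apply ContinuousLinearMap.opNorm_le_bound _ (by positivity)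
      intro e
      by_cases he : e = 0
      · simp [he]
      · have hne : ‖e‖ ≠ 0 := norm_ne_zero_iff.mpr he
        set x : E := ‖e‖⁻¹ • e with hxdef
        have hxs : x ∈ Metric.sphere (0 : E) 1 := by
          have hx1 : ‖x‖ = 1 := by
            rw [hxdef, norm_smul, Real.norm_eq_abs,
              abs_of_nonneg (inv_nonneg.mpr (norm_nonneg e)), inv_mul_cancel₀ hne]
          simpa [Metric.mem_sphere, dist_eq_norm] using hx1
        have hxS : (x : X) ∈ S := ⟨x, hxs, rfl⟩
        obtain ⟨c, hcT, hxc⟩ := Set.mem_iUnion₂.mp (hTcov hxS)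
        have hcb : |f c - g c| < β := by
          rw [abs_sub_comm]; exact hmemV g hg c hcT
        have hdist : ‖(x : X) - c‖ < β := by
          rw [Metric.mem_ball, dist_eq_norm] at hxc; exact hxc
        have hval : |(f - g) (x : X)| ≤ 3 * β := by
          have h1 : (f - g) (x : X) = (f - g) c + (f - g) ((x : X) - c) := by
            rw [map_sub]; ring
          have h2 : |(f - g) ((x : X) - c)| ≤ 2 * β := by
            calc |(f - g) ((x : X) - c)| ≤ ‖f - g‖ * ‖(x : X) - c‖ :=
                  (f - g).le_opNorm _
            _ ≤ 2 * β := by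
                apply mul_le_mul hfg hdist.le (norm_nonneg _) (by norm_num)
          have h3 : |(f - g) c| < β := by
            simpa [ContinuousLinearMap.sub_apply] using hcb
          calc |(f - g) (x : X)| ≤ |(f - g) c| + |(f - g) ((x : X) - c)| := by
                rw [h1]; exact abs_add_le _ _
          _ ≤ 3 * β := by linarith
        have hex : (e : X) = ‖e‖ • (x : X) := by
          rw [hxdef]
          push_cast
          rw [smul_smul, mul_inv_cancel₀ hne, one_smul]
        have : φ e = ‖e‖ * (f - g) (x : X) := by
          rw [hφdef]
          simp only [ContinuousLinearMap.comp_apply, Submodule.subtypeL_apply]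
          rw [hex, map_smul, smul_eq_mul]
        rw [Real.norm_eq_abs, this, abs_mul, abs_of_nonneg (norm_nonneg (e : E))]
        calc ‖e‖ * |(f - g) (x : X)| ≤ ‖e‖ * (3 * β) :=
              mul_le_mul_of_nonneg_left hval (norm_nonneg _)
        _ = 3 * β * ‖e‖ := by ring
    obtain ⟨k, hkext, hknorm⟩ := exists_extension_norm_eq E φ
    refine ⟨k, by rw [hknorm]; exact hφn, ?_⟩
    intro x hx
    have := hkext ⟨x, hx⟩
    rw [hφdef] at this
    simp only [ContinuousLinearMap.comp_apply, Submodule.subtypeL_apply,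
      ContinuousLinearMap.sub_apply] at this
    simp only [ContinuousLinearMap.add_apply]
    rw [this]; ring
  obtain ⟨k₁, hk₁n, hk₁e⟩ := key g₁ hg₁
  obtain ⟨k₂, hk₂n, hk₂e⟩ := key g₂ hg₂
  refine ⟨g₁ + k₁, g₂ + k₂, ?_, ?_, ?_⟩
  · calc ‖g₁ + k₁‖ ≤ ‖g₁‖ + ‖k₁‖ := norm_add_le _ _
    _ ≤ 1 + ε := by have h1 : ‖g₁‖ ≤ 1 := hg₁.1; linarith
  · calc ‖g₂ + k₂‖ ≤ ‖g₂‖ + ‖k₂‖ := norm_add_le _ _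
    _ ≤ 1 + ε := by have h1 : ‖g₂‖ ≤ 1 := hg₂.1; linarith
  · -- find the witness y
    have hlow : δ - 8 * β < ‖(g₁ + k₁) - (g₂ + k₂)‖ := by
      have h1 : ‖g₁ - g₂‖ ≤ ‖(g₁ + k₁) - (g₂ + k₂)‖ + ‖k₁‖ + ‖k₂‖ := by
        have : g₁ - g₂ = ((g₁ + k₁) - (g₂ + k₂)) - k₁ + k₂ := by abel
        rw [this]
        calc ‖(g₁ + k₁) - (g₂ + k₂) - k₁ + k₂‖
            ≤ ‖(g₁ + k₁) - (g₂ + k₂) - k₁‖ + ‖k₂‖ := norm_add_le _ _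
        _ ≤ ‖(g₁ + k₁) - (g₂ + k₂)‖ + ‖k₁‖ + ‖k₂‖ := by
            have := norm_sub_le ((g₁ + k₁) - (g₂ + k₂)) k₁; linarith
      rw [dist_eq_norm] at hgd
      linarith
    obtain ⟨y, hy1, hy2⟩ := ((g₁ + k₁) - (g₂ + k₂)).exists_lt_apply_of_lt_opNorm hlow
    set ψ : StrongDual ℝ X := (g₁ + k₁) - (g₂ + k₂) with hψdef
    have hval : δ - 8 * β < |ψ y| := hy2
    set y' : X := if 0 ≤ ψ y then y else -y with hy'def
    have hψy' : ψ y' = |ψ y| := by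
      rw [hy'def]
      split_ifs with hsgn
      · exact (abs_of_nonneg hsgn).symm
      · rw [map_neg]; rw [abs_of_neg (not_le.mp hsgn)]
    have hy'norm : ‖y'‖ < 1 := by
      rw [hy'def]; split_ifs <;> simpa
    have hψy'pos : 0 < ψ y' := by
      rw [hψy']
      have : 0 < δ - 8 * β := by linarith
      linarith
    have hy'ne : y' ≠ 0 := by
      intro hc; rw [hc, map_zero] at hψy'pos; exact lt_irrefl _ hψy'pos
    have hy'npos : 0 < ‖y'‖ := norm_pos_iff.mpr hy'ne
    refine ⟨‖y'‖⁻¹ • y', ?_, ?_, ?_⟩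
    · rw [norm_smul, Real.norm_eq_abs, abs_of_nonneg (inv_nonneg.mpr (norm_nonneg _)),
        inv_mul_cancel₀ (ne_of_gt hy'npos)]
    · intro x hx
      exact ⟨hk₁e x hx, hk₂e x hx⟩
    · have h1 : ψ (‖y'‖⁻¹ • y') = ‖y'‖⁻¹ * ψ y' := by rw [map_smul, smul_eq_mul]
      have h2 : (1 : ℝ) ≤ ‖y'‖⁻¹ := (one_le_inv_iff₀.mpr ⟨hy'npos, hy'norm.le⟩)
      have h3 : ψ y' ≤ ‖y'‖⁻¹ * ψ y' := by
        nlinarith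
      have h4 : δ - ε ≤ δ - 8 * β := by linarith
      have : (g₁ + k₁) (‖y'‖⁻¹ • y') - (g₂ + k₂) (‖y'‖⁻¹ • y') = ψ (‖y'‖⁻¹ • y') := by
        rw [hψdef, ContinuousLinearMap.sub_apply]
      rw [this, h1]
      have : δ - 8 * β < ψ y' := by rw [hψy']; exact hval
      linarith


lemma backward_dir (X : Type*) [NormedAddCommGroup X] [NormedSpace ℝ X] [Nontrivial X]
    (δ : ℝ) (hδ : 0 < δ)
    (hext : ∀ E : Submodule ℝ X, FiniteDimensional ℝ E →
        ∀ f : StrongDual ℝ X, ‖f‖ ≤ 1 →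
          ∀ ε > (0 : ℝ), ∃ f₁ f₂ : StrongDual ℝ X,
            ‖f₁‖ ≤ 1 + ε ∧ ‖f₂‖ ≤ 1 + ε ∧ ∃ y : X, ‖y‖ = 1 ∧
              (∀ x ∈ E, f₁ x = f x ∧ f₂ x = f x) ∧ δ - ε < f₁ y - f₂ y) :
    ∀ V : Set (WeakDual ℝ X), IsOpen V →
    ∀ U : Set (StrongDual ℝ X),
      U = {f : StrongDual ℝ X | ‖f‖ ≤ 1} ∩
            {f : StrongDual ℝ X | StrongDual.toWeakDual f ∈ V} →
      U.Nonempty → δ ≤ Metric.diam U := by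
  intro V hVopen U hU hUne
  obtain ⟨f, hfU⟩ := hUne
  have hf1 : ‖f‖ ≤ 1 := by rw [hU] at hfU; exact hfU.1
  have hf2 : StrongDual.toWeakDual f ∈ V := by rw [hU] at hfU; exact hfU.2
  -- extract a basic weak* neighborhood
  obtain ⟨t, ht, hpre⟩ : ∃ t : Set (X → ℝ), IsOpen t ∧
      (fun (φ : WeakDual ℝ X) (y : X) => φ y) ⁻¹' t = V := isOpen_induced_iff.mp hVopen
  have hft : (fun y : X => f y) ∈ t := by
    rw [← hpre] at hf2; exact hf2
  obtain ⟨I, u, hIu, hIsub⟩ := isOpen_pi_iff.mp ht _ hft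
  -- radii
  have hr : ∀ a : X, ∃ r > (0 : ℝ), a ∈ I → Metric.ball (f a) r ⊆ u a := by
    intro a
    by_cases ha : a ∈ I
    · obtain ⟨r, hr0, hrsub⟩ := Metric.isOpen_iff.mp (hIu a ha).1 (f a) (hIu a ha).2
      exact ⟨r, hr0, fun _ => hrsub⟩
    · exact ⟨1, one_pos, fun h => absurd h ha⟩
  choose ρ hρpos hρsub using hr
  set r : ℝ := (insert (1 : ℝ) (I.image ρ)).min' (Finset.insert_nonempty _ _) with hrdef
  have hr0 : 0 < r := by
    have := Finset.min'_mem (insert (1 : ℝ) (I.image ρ)) (Finset.insert_nonempty _ _)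
    rw [← hrdef] at this
    rcases Finset.mem_insert.mp this with h | h
    · rw [h]; norm_num
    · obtain ⟨a, _, ha⟩ := Finset.mem_image.mp h
      rw [← ha]; exact hρpos a
  have hrle : ∀ a ∈ I, r ≤ ρ a := fun a ha =>
    Finset.min'_le _ _ (Finset.mem_insert.mpr (Or.inr (Finset.mem_image_of_mem ρ ha)))
  set M : ℝ := (insert (1 : ℝ) (I.image fun a => ‖a‖)).max' (Finset.insert_nonempty _ _)
    with hMdef
  have hM1 : (1 : ℝ) ≤ M := Finset.le_max' _ _ (Finset.mem_insert_self _ _)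
  have hMa : ∀ a ∈ I, ‖a‖ ≤ M := fun a ha =>
    Finset.le_max' _ _ (Finset.mem_insert.mpr (Or.inr (Finset.mem_image_of_mem _ ha)))
  have hM0 : 0 < M := by linarith
  -- the finite-dimensional subspace
  set E : Submodule ℝ X := Submodule.span ℝ (I : Set X) with hEdef
  have hEfin : FiniteDimensional ℝ E := FiniteDimensional.span_of_finite ℝ (I.finite_toSet)
  -- suppose the diameter is small
  by_contra hlt
  push_neg at hlt
  set d : ℝ := Metric.diam U with hddef
  have hd0 : 0 ≤ d := Metric.diam_nonneg
  set ε : ℝ := min (r / (2 * M)) ((δ - d) / (2 * (1 + d))) with hεdef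
  have hε0 : 0 < ε := by
    apply lt_min
    · positivity
    · have : 0 < δ - d := by linarith
      positivity
  have hεr : ε * M ≤ r / 2 := by
    have h1 : ε ≤ r / (2 * M) := min_le_left _ _
    calc ε * M ≤ (r / (2 * M)) * M := mul_le_mul_of_nonneg_right h1 hM0.le
    _ = r / 2 := by field_simp
  have hεd : ε ≤ (δ - d) / (2 * (1 + d)) := min_le_right _ _
  obtain ⟨f₁, f₂, hn₁, hn₂, y, hy, hagree, hval⟩ := hext E hEfin f hf1 ε hε0
  have h1ε : (0:ℝ) < 1 + ε := by linarith
  set g₁ : StrongDual ℝ X := (1 + ε)⁻¹ • f₁ with hg₁def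
  set g₂ : StrongDual ℝ X := (1 + ε)⁻¹ • f₂ with hg₂def
  have hgU : ∀ (g : StrongDual ℝ X) (f' : StrongDual ℝ X),
      g = (1 + ε)⁻¹ • f' → ‖f'‖ ≤ 1 + ε → (∀ x ∈ E, f' x = f x) → g ∈ U := by
    intro g f' hg hn hag
    rw [hU]
    constructor
    · show ‖g‖ ≤ 1
      rw [hg, norm_smul, Real.norm_eq_abs, abs_of_pos (inv_pos.mpr h1ε)]
      calc (1 + ε)⁻¹ * ‖f'‖ ≤ (1 + ε)⁻¹ * (1 + ε) :=
            mul_le_mul_of_nonneg_left hn (inv_pos.mpr h1ε).le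
      _ = 1 := inv_mul_cancel₀ (ne_of_gt h1ε)
    · show StrongDual.toWeakDual g ∈ V
      rw [← hpre]
      apply hIsub
      intro a ha
      apply hρsub a ha
      rw [Metric.mem_ball, Real.dist_eq]
      have haE : a ∈ E := Submodule.subset_span ha
      have hfa : f' a = f a := hag a haE
      have hga : g a = (1 + ε)⁻¹ * f a := by
        rw [hg]; simp [hfa]
      have hcoe : (fun (φ : WeakDual ℝ X) (y : X) => φ y) (StrongDual.toWeakDual g) a
          = g a := rfl
      rw [hcoe, hga]
      have habs : |(1 + ε)⁻¹ * f a - f a| = (ε / (1 + ε)) * |f a| := by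
        have : (1 + ε)⁻¹ * f a - f a = -(ε / (1 + ε)) * f a := by
          field_simp
          ring
        rw [this, abs_mul, abs_neg, abs_of_pos (by positivity : (0:ℝ) < ε / (1+ε))]
      rw [habs]
      have hfab : |f a| ≤ ‖a‖ := by
        calc |f a| ≤ ‖f‖ * ‖a‖ := f.le_opNorm a
        _ ≤ 1 * ‖a‖ := mul_le_mul_of_nonneg_right hf1 (norm_nonneg a)
        _ = ‖a‖ := one_mul _
      have h2 : ε / (1 + ε) ≤ ε := by
        rw [div_le_iff₀ h1ε]
        nlinarith
      calc (ε / (1 + ε)) * |f a| ≤ ε * ‖a‖ :=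
            mul_le_mul h2 hfab (abs_nonneg _) hε0.le
      _ ≤ ε * M := mul_le_mul_of_nonneg_left (hMa a ha) hε0.le
      _ ≤ r / 2 := hεr
      _ < r := by linarith
      _ ≤ ρ a := hrle a ha
  have hg₁U : g₁ ∈ U := hgU g₁ f₁ hg₁def hn₁ (fun x hx => (hagree x hx).1)
  have hg₂U : g₂ ∈ U := hgU g₂ f₂ hg₂def hn₂ (fun x hx => (hagree x hx).2)
  -- distance estimate
  have hUb : Bornology.IsBounded U := by
    apply (Metric.isBounded_closedBall (x := (0 : StrongDual ℝ X)) (r := 1)).subset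
    rw [hU]
    intro g hg
    rw [Metric.mem_closedBall, dist_zero_right]
    exact hg.1
  have hdist : dist g₁ g₂ ≤ d := Metric.dist_le_diam_of_mem hUb hg₁U hg₂U
  have hdist2 : (δ - ε) / (1 + ε) < dist g₁ g₂ := by
    have h1 : (g₁ - g₂) y ≤ ‖g₁ - g₂‖ := by
      calc (g₁ - g₂) y ≤ |(g₁ - g₂) y| := le_abs_self _
      _ ≤ ‖g₁ - g₂‖ * ‖y‖ := (g₁ - g₂).le_opNorm y
      _ = ‖g₁ - g₂‖ := by rw [hy, mul_one]
    have h2 : (g₁ - g₂) y = (1 + ε)⁻¹ * (f₁ y - f₂ y) := by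
      rw [hg₁def, hg₂def]
      simp [mul_sub]
    have h3 : (δ - ε) / (1 + ε) < (1 + ε)⁻¹ * (f₁ y - f₂ y) := by
      rw [div_eq_inv_mul]
      exact mul_lt_mul_of_pos_left hval (inv_pos.mpr h1ε)
    rw [dist_eq_norm]
    calc (δ - ε) / (1 + ε) < (1 + ε)⁻¹ * (f₁ y - f₂ y) := h3
    _ = (g₁ - g₂) y := h2.symm
    _ ≤ ‖g₁ - g₂‖ := h1
  -- contradiction
  have hfinal : (δ - ε) / (1 + ε) < d := lt_of_lt_of_le hdist2 hdist
  rw [div_lt_iff₀ h1ε] at hfinal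
  -- δ - ε < d (1 + ε) = d + d ε,  so δ - d < ε (1 + d) ≤ (δ-d)/2
  have h5 : δ - d < ε * (1 + d) := by nlinarith
  have h6 : ε * (1 + d) ≤ (δ - d) / 2 := by
    have := mul_le_mul_of_nonneg_right hεd (by linarith : (0:ℝ) ≤ 1 + d)
    calc ε * (1 + d) ≤ ((δ - d) / (2 * (1 + d))) * (1 + d) := this
    _ = (δ - d) / 2 := by field_simp
  linarith

end Aux

theorem weaklyAverageRough_iff_extension
    (X : Type*) [NormedAddCommGroup X] [NormedSpace ℝ X] [CompleteSpace X] [Nontrivial X]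
    (δ : ℝ) (hδ : 0 < δ) :
    WeaklyAverageRough X δ ↔
      ∀ E : Submodule ℝ X, FiniteDimensional ℝ E →
        ∀ f : StrongDual ℝ X, ‖f‖ ≤ 1 →
          ∀ ε > (0 : ℝ), ∃ f₁ f₂ : StrongDual ℝ X,
            ‖f₁‖ ≤ 1 + ε ∧ ‖f₂‖ ≤ 1 + ε ∧ ∃ y : X, ‖y‖ = 1 ∧
              (∀ x ∈ E, f₁ x = f x ∧ f₂ x = f x) ∧ δ - ε < f₁ y - f₂ y := by
  constructor
  · intro h
    exact forward_dir X δ hδ h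
  · intro h
    exact backward_dir X δ hδ h
end

section
/- Let X be a nontrivial real Banach space and δ > 0. Then X is weakly δ-average rough if and only if the following holds: whenever n ∈ ℕ, x₁,…,xₙ are in the unit sphere S_X, x* is in the unit sphere S_{X*} of the dual, and ε > 0, there exist x*₁, x*₂ in the closed unit ball B_{X*} and y in the closed unit ball B_X such that |x*ⱼ(xᵢ) − x*(xᵢ)| < ε for all i ∈ {1,…,n} and j ∈ {1,2}, and x*₁(y) − x*₂(y) > δ − ε. -/
open scoped BigOperators

section WARHelpers

open NormedSpace Metric

variable {X : Type*} [NormedAddCommGroup X] [NormedSpace ℝ X]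

/-- Basic weak*-neighborhood extraction. -/
lemma war_basic_nbhd {V : Set (WeakDual ℝ X)} (hV : IsOpen V)
    {g : StrongDual ℝ X} (hg : StrongDual.toWeakDual g ∈ V) :
    ∃ (I : Finset X) (r : X → ℝ), (∀ a ∈ I, 0 < r a) ∧
      ∀ h : StrongDual ℝ X, (∀ a ∈ I, |h a - g a| < r a) →
        StrongDual.toWeakDual h ∈ V := by
  obtain ⟨t, ht, hpre⟩ := isOpen_induced_iff.1 hV
  rw [← hpre] at hg
  have hgt : (fun y => g y) ∈ t := hg
  obtain ⟨I, u, hu, hsub⟩ := isOpen_pi_iff.1 ht _ hgt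
  have hr : ∀ a : X, ∃ ra : ℝ, a ∈ I → (0 < ra ∧ Metric.ball (g a) ra ⊆ u a) := by
    intro a
    by_cases h : a ∈ I
    · obtain ⟨ra, hra, hball⟩ := Metric.isOpen_iff.1 (hu a h).1 _ (hu a h).2
      exact ⟨ra, fun _ => ⟨hra, hball⟩⟩
    · exact ⟨1, fun h' => absurd h' h⟩
  choose r hrr using hr
  refine ⟨I, r, fun a ha => (hrr a ha).1, fun h hcl => ?_⟩
  rw [← hpre]
  apply hsub
  intro a ha
  exact (hrr a ha).2 (show dist (h a) (g a) < r a by rw [Real.dist_eq]; exact hcl a ha)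

/-- Unit-norm extension agreeing with `g` on a proper closed subspace. -/
lemma war_unit_extension (Y : Submodule ℝ X) (hY : IsClosed (Y : Set X))
    {z : X} (hz : z ∉ Y) (g : StrongDual ℝ X) (hg : ‖g‖ ≤ 1) :
    ∃ f : StrongDual ℝ X, ‖f‖ = 1 ∧ ∀ y ∈ Y, f y = g y := by
  -- extension of g restricted to Y with the same norm
  obtain ⟨g₀, hg₀ext, hg₀norm⟩ := exists_extension_norm_eq Y (g.comp Y.subtypeL)
  have hg₀le : ‖g₀‖ ≤ 1 := by
    rw [hg₀norm]
    refine le_trans (ContinuousLinearMap.opNorm_le_bound _ (norm_nonneg g) ?_) hg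
    intro y
    calc ‖(g.comp Y.subtypeL) y‖ = ‖g (y : X)‖ := rfl
      _ ≤ ‖g‖ * ‖(y : X)‖ := g.le_opNorm _
      _ = ‖g‖ * ‖y‖ := by rw [Submodule.norm_coe]
  -- functional vanishing on Y, nonzero
  obtain ⟨φ, u, hφz, hφY⟩ := geometric_hahn_banach_point_closed (Y.convex) hY hz
  have hφ0 : ∀ b ∈ Y, φ b = 0 := by
    intro b hb
    by_contra hne
    have h1 : u < φ (((u - 1) / φ b) • b) := hφY _ (Y.smul_mem _ hb)
    rw [map_smul, smul_eq_mul, div_mul_cancel₀ _ hne] at h1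
    linarith
  have hu0 : u < 0 := by simpa using hφY 0 Y.zero_mem
  have hφne : φ ≠ 0 := by
    intro h
    rw [h] at hφz
    simp at hφz
    linarith
  have hφpos : 0 < ‖φ‖ := norm_pos_iff.2 hφne
  -- intermediate value theorem
  set T : ℝ := 2 / ‖φ‖ with hT
  have hTpos : 0 ≤ T := by positivity
  have hcont : Continuous fun t : ℝ => ‖g₀ + t • φ‖ :=
    (continuous_const.add (continuous_id.smul continuous_const)).norm
  have hF0 : ‖g₀ + (0 : ℝ) • φ‖ ≤ 1 := by simpa using hg₀le
  have hFT : 1 ≤ ‖g₀ + T • φ‖ := by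
    have h1 : ‖T • φ‖ - ‖g₀‖ ≤ ‖g₀ + T • φ‖ := by
      have h := norm_sub_le (g₀ + T • φ) g₀
      have he : (g₀ + T • φ) - g₀ = T • φ := by abel
      rw [he] at h
      linarith
    have h2 : ‖T • φ‖ = 2 := by
      have : ‖T • φ‖ = |T| * ‖φ‖ := by
        have := norm_smul T φ
        simpa using this
      rw [this, abs_of_nonneg hTpos, hT]
      field_simp
    linarith
  have : (1 : ℝ) ∈ (fun t : ℝ => ‖g₀ + t • φ‖) '' Set.Icc 0 T := by
    apply intermediate_value_Icc hTpos hcont.continuousOn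
    exact ⟨by simpa using hF0, hFT⟩
  obtain ⟨t, _, ht⟩ := this
  refine ⟨g₀ + t • φ, ht, fun y hy => ?_⟩
  have h1 : g₀ y = g y := hg₀ext ⟨y, hy⟩
  have h2 : φ y = 0 := hφ0 y hy
  simp [ContinuousLinearMap.add_apply, h1, h2]

lemma war_forward {δ : ℝ} (hδ : 0 < δ) (hw : WeaklyAverageRough X δ) :
    ∀ n : ℕ, 0 < n → ∀ x : Fin n → X, (∀ i, ‖x i‖ = 1) →
      ∀ f : StrongDual ℝ X, ‖f‖ = 1 →
        ∀ ε > (0 : ℝ), ∃ f₁ f₂ : StrongDual ℝ X,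
          ‖f₁‖ ≤ 1 ∧ ‖f₂‖ ≤ 1 ∧ ∃ y : X, ‖y‖ ≤ 1 ∧
            (∀ i, |f₁ (x i) - f (x i)| < ε ∧ |f₂ (x i) - f (x i)| < ε) ∧
            δ - ε < f₁ y - f₂ y := by
  intro n hn x hx f hf ε hε
  by_cases hcase : δ ≤ ε / 2
  · exact ⟨f, f, le_of_eq hf, le_of_eq hf, 0, by simp, fun i => by simpa using hε, by
      simp; linarith⟩
  push_neg at hcase
  set V : Set (WeakDual ℝ X) :=
    ⋂ i, (fun v : WeakDual ℝ X => v (x i)) ⁻¹' Metric.ball (f (x i)) (ε / 2) with hVdef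
  have hVopen : IsOpen V :=
    isOpen_iInter_of_finite fun i =>
      (Metric.isOpen_ball).preimage (WeakDual.eval_continuous (x i))
  set U : Set (StrongDual ℝ X) :=
    {g : StrongDual ℝ X | ‖g‖ ≤ 1} ∩
      {g : StrongDual ℝ X | StrongDual.toWeakDual g ∈ V} with hUdef
  have hfU : f ∈ U := by
    constructor
    · exact le_of_eq hf
    · simp only [Set.mem_setOf_eq, hVdef, Set.mem_iInter]
      intro i
      simp [Real.dist_eq, half_pos hε]
  have hdiam : δ ≤ Metric.diam U := hw V hVopen U rfl ⟨f, hfU⟩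
  -- find two points at distance > δ - ε/2
  have : ∃ f₁ ∈ U, ∃ f₂ ∈ U, δ - ε / 2 < dist f₁ f₂ := by
    by_contra hcon
    push_neg at hcon
    have : Metric.diam U ≤ δ - ε / 2 :=
      Metric.diam_le_of_forall_dist_le (by linarith) fun a ha b hb => hcon a ha b hb
    linarith
  obtain ⟨f₁, hf₁, f₂, hf₂, hdist⟩ := this
  have hnorm : δ - ε < ‖f₁ - f₂‖ := by
    rw [dist_eq_norm] at hdist; linarith
  obtain ⟨y, hy1, hy2⟩ := (f₁ - f₂).exists_lt_apply_of_lt_opNorm hnorm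
  have hclose : ∀ g ∈ U, ∀ i, |g (x i) - f (x i)| < ε := by
    intro g hg i
    have := hg.2
    simp only [Set.mem_setOf_eq, hVdef, Set.mem_iInter] at this
    have h2 := this i
    have : dist ((StrongDual.toWeakDual g) (x i)) (f (x i)) < ε / 2 := h2
    rw [Real.dist_eq] at this
    have he : (StrongDual.toWeakDual g) (x i) = g (x i) := rfl
    rw [he] at this
    linarith
  rcases le_or_gt 0 ((f₁ - f₂) y) with hpos | hneg
  · refine ⟨f₁, f₂, hf₁.1, hf₂.1, y, le_of_lt hy1, fun i => ⟨hclose f₁ hf₁ i, hclose f₂ hf₂ i⟩, ?_⟩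
    have : ‖(f₁ - f₂) y‖ = f₁ y - f₂ y := by
      rw [Real.norm_eq_abs, abs_of_nonneg hpos]; simp
    linarith [hy2.trans_eq this]
  · refine ⟨f₁, f₂, hf₁.1, hf₂.1, -y, by simpa using le_of_lt hy1,
      fun i => ⟨hclose f₁ hf₁ i, hclose f₂ hf₂ i⟩, ?_⟩
    have h1 : ‖(f₁ - f₂) y‖ = -(f₁ y - f₂ y) := by
      rw [Real.norm_eq_abs, abs_of_neg hneg]; simp
    have h2 : f₁ (-y) - f₂ (-y) = -(f₁ y - f₂ y) := by simp only [map_neg]; ring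
    rw [h2]
    linarith [hy2.trans_eq h1]

lemma war_backward [Nontrivial X] {δ : ℝ} (hδ : 0 < δ)
    (h : ∀ n : ℕ, 0 < n → ∀ x : Fin n → X, (∀ i, ‖x i‖ = 1) →
      ∀ f : StrongDual ℝ X, ‖f‖ = 1 →
        ∀ ε > (0 : ℝ), ∃ f₁ f₂ : StrongDual ℝ X,
          ‖f₁‖ ≤ 1 ∧ ‖f₂‖ ≤ 1 ∧ ∃ y : X, ‖y‖ ≤ 1 ∧
            (∀ i, |f₁ (x i) - f (x i)| < ε ∧ |f₂ (x i) - f (x i)| < ε) ∧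
            δ - ε < f₁ y - f₂ y) :
    WeaklyAverageRough X δ := by
  classical
  intro V hV U hU hne
  obtain ⟨g, hgU⟩ := hne
  rw [hU] at hgU
  obtain ⟨hgnorm, hgV⟩ := hgU
  have hgnorm : ‖g‖ ≤ 1 := hgnorm
  obtain ⟨I, r, hrpos, hIr⟩ := war_basic_nbhd hV hgV
  set Y : Submodule ℝ X := Submodule.span ℝ (I : Set X) with hYdef
  haveI hYfin : FiniteDimensional ℝ Y := FiniteDimensional.span_of_finite ℝ I.finite_toSet
  obtain ⟨x₀, hx₀⟩ : ∃ x₀ : X, ‖x₀‖ = 1 := exists_norm_eq X zero_le_one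
  have hUbdd : Bornology.IsBounded U := by
    refine (Metric.isBounded_closedBall (x := (0 : StrongDual ℝ X)) (r := 1)).subset ?_
    intro u hu
    rw [hU] at hu
    exact mem_closedBall_zero_iff.2 hu.1
  by_cases hspan : ∃ z : X, z ∉ Y
  · -- Main case : Y is a proper subspace
    obtain ⟨z, hz⟩ := hspan
    have hYclosed : IsClosed (Y : Set X) := Submodule.closed_of_finiteDimensional Y
    obtain ⟨f, hfnorm, hfY⟩ := war_unit_extension Y hYclosed hz g hgnorm
    set s : Finset X := insert x₀ ((I.filter (fun a => a ≠ 0)).image (fun a => ‖a‖⁻¹ • a))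
      with hs
    have hsunit : ∀ b ∈ s, ‖b‖ = 1 := by
      intro b hb
      rcases Finset.mem_insert.1 hb with hb | hb
      · rw [hb]; exact hx₀
      · obtain ⟨a, ha, rfl⟩ := Finset.mem_image.1 hb
        have ha0 : a ≠ 0 := (Finset.mem_filter.1 ha).2
        exact norm_smul_inv_norm (𝕜 := ℝ) ha0
    have hscard : 0 < s.card := Finset.card_pos.2 ⟨x₀, Finset.mem_insert_self _ _⟩
    set x : Fin s.card → X := fun i => (s.equivFin.symm i : X) with hxdef
    have hx : ∀ i, ‖x i‖ = 1 := fun i => hsunit _ (s.equivFin.symm i).2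
    have hρ₂ : ∃ ρ₂ > (0 : ℝ), ∀ a ∈ I, a ≠ 0 → ρ₂ ≤ r a / ‖a‖ := by
      by_cases hI' : (I.filter (fun a => a ≠ 0)).Nonempty
      · refine ⟨(I.filter fun a => a ≠ 0).inf' hI' (fun a => r a / ‖a‖), ?_, ?_⟩
        · rw [gt_iff_lt, Finset.lt_inf'_iff]
          intro b hb
          obtain ⟨hbI, hb0⟩ := Finset.mem_filter.1 hb
          exact div_pos (hrpos b hbI) (norm_pos_iff.2 hb0)
        · intro a ha ha0
          exact Finset.inf'_le _ (Finset.mem_filter.2 ⟨ha, ha0⟩)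
      · exact ⟨1, one_pos, fun a ha ha0 =>
          absurd ⟨a, Finset.mem_filter.2 ⟨ha, ha0⟩⟩ hI'⟩
    obtain ⟨ρ₂, hρ₂pos, hρ₂le⟩ := hρ₂
    refine le_of_forall_sub_le fun ε' hε' => ?_
    set ε : ℝ := min ε' ρ₂ with hεdef
    have hεpos : 0 < ε := lt_min hε' hρ₂pos
    obtain ⟨f₁, f₂, hn₁, hn₂, y, hy, hclose, hgap⟩ := h s.card hscard x hx f hfnorm ε hεpos
    have hmem : ∀ fj : StrongDual ℝ X, ‖fj‖ ≤ 1 →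
        (∀ i, |fj (x i) - f (x i)| < ε) → fj ∈ U := by
      intro fj hfjn hfjc
      rw [hU]
      refine ⟨hfjn, hIr fj ?_⟩
      intro a ha
      by_cases ha0 : a = 0
      · subst ha0
        simpa using hrpos 0 ha
      · have hna : 0 < ‖a‖ := norm_pos_iff.2 ha0
        set b : X := ‖a‖⁻¹ • a with hbdef
        have hbs : b ∈ s := Finset.mem_insert_of_mem
          (Finset.mem_image.2 ⟨a, Finset.mem_filter.2 ⟨ha, ha0⟩, rfl⟩)
        have hxib : x (s.equivFin ⟨b, hbs⟩) = b := by
          simp [hxdef]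
        have h1 : |fj b - f b| < ε := by
          have := hfjc (s.equivFin ⟨b, hbs⟩)
          rwa [hxib] at this
        have hbY : b ∈ Y := Y.smul_mem _ (Submodule.subset_span ha)
        have h2 : f b = g b := hfY b hbY
        have h3 : |fj b - g b| < r a / ‖a‖ :=
          lt_of_lt_of_le (h2 ▸ h1) (le_trans (min_le_right _ _) (hρ₂le a ha ha0))
        have e1 : fj b = ‖a‖⁻¹ * fj a := by rw [hbdef, map_smul, smul_eq_mul]
        have e2 : g b = ‖a‖⁻¹ * g a := by rw [hbdef, map_smul, smul_eq_mul]
        have h4 : |fj a - g a| = ‖a‖ * |fj b - g b| := by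
          rw [e1, e2, show ‖a‖⁻¹ * fj a - ‖a‖⁻¹ * g a = ‖a‖⁻¹ * (fj a - g a) from by ring,
            abs_mul, abs_of_pos (inv_pos.2 hna)]
          field_simp
        rw [h4]
        calc ‖a‖ * |fj b - g b| < ‖a‖ * (r a / ‖a‖) := by
              exact mul_lt_mul_of_pos_left h3 hna
          _ = r a := by field_simp
    have hm₁ : f₁ ∈ U := hmem f₁ hn₁ fun i => (hclose i).1
    have hm₂ : f₂ ∈ U := hmem f₂ hn₂ fun i => (hclose i).2
    have hd : dist f₁ f₂ ≤ Metric.diam U := Metric.dist_le_diam_of_mem hUbdd hm₁ hm₂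
    have h5 : f₁ y - f₂ y ≤ ‖f₁ - f₂‖ := by
      have h6 : (f₁ - f₂) y ≤ |(f₁ - f₂) y| := le_abs_self _
      have h7 : |(f₁ - f₂) y| ≤ ‖f₁ - f₂‖ * ‖y‖ := (f₁ - f₂).le_opNorm y
      have h8 : ‖f₁ - f₂‖ * ‖y‖ ≤ ‖f₁ - f₂‖ * 1 :=
        mul_le_mul_of_nonneg_left hy (norm_nonneg _)
      have h9 : (f₁ - f₂) y = f₁ y - f₂ y := rfl
      rw [h9] at h6
      rw [h9] at h7
      linarith
    rw [dist_eq_norm] at hd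
    have hεε' : ε ≤ ε' := min_le_left _ _
    linarith
  · -- Degenerate case : Y = ⊤, so X is finite-dimensional; derive a contradiction
    exfalso
    push_neg at hspan
    have hYtop : Y = ⊤ := eq_top_iff.2 fun z _ => hspan z
    haveI : FiniteDimensional ℝ X := Module.Finite.equiv (LinearEquiv.ofTop Y hYtop)
    have hcomp : IsCompact (Metric.sphere (0 : X) 1) := isCompact_sphere 0 1
    obtain ⟨t, hts, htf, hcover⟩ :=
      finite_approx_of_totallyBounded hcomp.totallyBounded (δ / 8) (by positivity)
    have hx₀s : x₀ ∈ Metric.sphere (0 : X) 1 := by simp [hx₀]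
    have hFcard : 0 < htf.toFinset.card := by
      obtain ⟨c, hc, -⟩ := Set.mem_iUnion₂.1 (hcover hx₀s)
      exact Finset.card_pos.2 ⟨c, htf.mem_toFinset.2 hc⟩
    set F := htf.toFinset with hF
    set xx : Fin F.card → X := fun i => (F.equivFin.symm i : X) with hxxdef
    have hxx : ∀ i, ‖xx i‖ = 1 := by
      intro i
      have h2 : ((F.equivFin.symm i : X)) ∈ t := htf.mem_toFinset.1 (F.equivFin.symm i).2
      have := hts h2
      simpa [Metric.mem_sphere] using this
    obtain ⟨f, hfn, -⟩ := exists_dual_vector ℝ x₀ (by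
      intro h0
      rw [h0] at hx₀
      simp at hx₀)
    obtain ⟨f₁, f₂, hn₁, hn₂, y, hy, hclose, hgap⟩ := h F.card hFcard xx hxx f hfn (δ / 16)
      (by positivity)
    rcases eq_or_ne y 0 with hy0 | hy0
    · rw [hy0] at hgap
      simp at hgap
      linarith
    · have hny : 0 < ‖y‖ := norm_pos_iff.2 hy0
      set zv : X := ‖y‖⁻¹ • y with hzv
      have hzs : zv ∈ Metric.sphere (0 : X) 1 := by
        have : ‖zv‖ = 1 := norm_smul_inv_norm (𝕜 := ℝ) hy0
        simpa [Metric.mem_sphere] using this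
      obtain ⟨c, hct, hzc⟩ := Set.mem_iUnion₂.1 (hcover hzs)
      have hcF : c ∈ F := htf.mem_toFinset.2 hct
      have hxic : xx (F.equivFin ⟨c, hcF⟩) = c := by simp [hxxdef]
      have h1 : |f₁ c - f c| < δ / 16 := by
        have := (hclose (F.equivFin ⟨c, hcF⟩)).1; rwa [hxic] at this
      have h2 : |f₂ c - f c| < δ / 16 := by
        have := (hclose (F.equivFin ⟨c, hcF⟩)).2; rwa [hxic] at this
      have hzcn : ‖zv - c‖ < δ / 8 := by
        rw [← dist_eq_norm]
        exact Metric.mem_ball.1 hzc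
      have hb₁ : |f₁ zv - f₁ c| ≤ δ / 8 := by
        have : f₁ zv - f₁ c = f₁ (zv - c) := by rw [map_sub]
        rw [this]
        calc |f₁ (zv - c)| ≤ ‖f₁‖ * ‖zv - c‖ := f₁.le_opNorm _
          _ ≤ 1 * ‖zv - c‖ := by
            exact mul_le_mul_of_nonneg_right hn₁ (norm_nonneg _)
          _ ≤ δ / 8 := by rw [one_mul]; linarith
      have hb₂ : |f₂ zv - f₂ c| ≤ δ / 8 := by
        have : f₂ zv - f₂ c = f₂ (zv - c) := by rw [map_sub]
        rw [this]
        calc |f₂ (zv - c)| ≤ ‖f₂‖ * ‖zv - c‖ := f₂.le_opNorm _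
          _ ≤ 1 * ‖zv - c‖ := by
            exact mul_le_mul_of_nonneg_right hn₂ (norm_nonneg _)
          _ ≤ δ / 8 := by rw [one_mul]; linarith
      have hzbound : |f₁ zv - f₂ zv| < 3 * δ / 8 := by
        have habs : |f₁ zv - f₂ zv| ≤ |f₁ zv - f₁ c| + |f₁ c - f₂ c| + |f₂ c - f₂ zv| := by
          have := abs_sub_le (f₁ zv) (f₁ c) (f₂ zv)
          have h' := abs_sub_le (f₁ c) (f₂ c) (f₂ zv)
          linarith [abs_sub_comm (f₂ c) (f₂ zv)]
        have hmid : |f₁ c - f₂ c| < δ / 8 := by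
          have := abs_sub_le (f₁ c) (f c) (f₂ c)
          have h2' : |f c - f₂ c| = |f₂ c - f c| := abs_sub_comm _ _
          linarith
        have h3' : |f₂ c - f₂ zv| = |f₂ zv - f₂ c| := abs_sub_comm _ _
        linarith
      have e1 : f₁ zv = ‖y‖⁻¹ * f₁ y := by rw [hzv, map_smul, smul_eq_mul]
      have e2 : f₂ zv = ‖y‖⁻¹ * f₂ y := by rw [hzv, map_smul, smul_eq_mul]
      have hfy : f₁ y - f₂ y = ‖y‖ * (f₁ zv - f₂ zv) := by
        rw [e1, e2]
        field_simp
      have hfinal : f₁ y - f₂ y ≤ |f₁ zv - f₂ zv| := by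
        rw [hfy]
        calc ‖y‖ * (f₁ zv - f₂ zv) ≤ ‖y‖ * |f₁ zv - f₂ zv| :=
              mul_le_mul_of_nonneg_left (le_abs_self _) (norm_nonneg _)
          _ ≤ 1 * |f₁ zv - f₂ zv| :=
              mul_le_mul_of_nonneg_right hy (abs_nonneg _)
          _ = |f₁ zv - f₂ zv| := one_mul _
      linarith

end WARHelpers

theorem weaklyAverageRough_iff_approx
    (X : Type*) [NormedAddCommGroup X] [NormedSpace ℝ X] [CompleteSpace X] [Nontrivial X]
    (δ : ℝ) (hδ : 0 < δ) :
    WeaklyAverageRough X δ ↔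
      ∀ n : ℕ, 0 < n → ∀ x : Fin n → X, (∀ i, ‖x i‖ = 1) →
        ∀ f : StrongDual ℝ X, ‖f‖ = 1 →
          ∀ ε > (0 : ℝ), ∃ f₁ f₂ : StrongDual ℝ X,
            ‖f₁‖ ≤ 1 ∧ ‖f₂‖ ≤ 1 ∧ ∃ y : X, ‖y‖ ≤ 1 ∧
              (∀ i, |f₁ (x i) - f (x i)| < ε ∧ |f₂ (x i) - f (x i)| < ε) ∧
              δ - ε < f₁ y - f₂ y := by
  exact ⟨fun hw => war_forward hδ hw, fun hr => war_backward hδ hr⟩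
end
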